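/- arXiv:1708.01279 — 5 statements merged into one kernel-verified Lean document; each statement's English description precedes it below -/
import Mathlib

section
/- Vizing's Adjacency Lemma: if G is a simple edge-Δ-critical graph and xy ∈ E(G), then y has at least Δ - d(x) + 1 neighbors z ≠ x with d(z) = Δ. -/
open Finset
open scoped Classical

variable {V : Type*}

/-- `φ` is a proper edge coloring of `G` using colors `{1,…,k}`. -/
def IsProperEdgeColoring (G : SimpleGraph V) (k : ℕ) (φ : Sym2 V → ℕ) : Prop :=
  (∀ e ∈ G.edgeSet, φ e ∈ Finset.Icc 1 k) ∧
  ∀ e ∈ G.edgeSet, ∀ f ∈ G.edgeSet, e ≠ f → (∃ v, v ∈ e ∧ v ∈ f) → φ e ≠ φ f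

/-- The set of colors of `{1,…,k}` missing at `v` under `φ`. -/
noncomputable def missing (G : SimpleGraph V) (k : ℕ) (φ : Sym2 V → ℕ) (v : V) : Finset ℕ :=
  (Finset.Icc 1 k).filter (fun c => ∀ u, G.Adj v u → φ s(v, u) ≠ c)

/-- `G` is edge-`Δ`-critical: max degree `Δ`, `χ' = Δ+1`, and every proper
subgraph is edge-`Δ`-colorable. -/
def EdgeCritical (G : SimpleGraph V) [Fintype V] (Δ : ℕ) : Prop :=
  G.maxDegree = Δ ∧
  ¬ (∃ φ, IsProperEdgeColoring G Δ φ) ∧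
  (∃ φ, IsProperEdgeColoring G (Δ + 1) φ) ∧
  ∀ H : SimpleGraph V, H < G → ∃ φ, IsProperEdgeColoring H Δ φ

namespace VAL

lemma mem_missing {W : SimpleGraph V} {k : ℕ} {f : Sym2 V → ℕ} {v : V} {c : ℕ} :
    c ∈ missing W k f v ↔ c ∈ Finset.Icc 1 k ∧ ∀ u, W.Adj v u → f s(v, u) ≠ c :=
  Finset.mem_filter

lemma proper_ne {W : SimpleGraph V} {k : ℕ} {f : Sym2 V → ℕ}
    (hf : IsProperEdgeColoring W k f) {t p q : V}
    (hp : W.Adj t p) (hq : W.Adj t q) (hpq : p ≠ q) :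
    f s(t, p) ≠ f s(t, q) := by
  apply hf.2 _ (W.mem_edgeSet.2 hp) _ (W.mem_edgeSet.2 hq)
  · intro heq; exact hpq (Sym2.congr_right.1 heq)
  · exact ⟨t, by simp, by simp⟩

lemma proper_unique {W : SimpleGraph V} {k : ℕ} {f : Sym2 V → ℕ}
    (hf : IsProperEdgeColoring W k f) {t p q : V}
    (hp : W.Adj t p) (hq : W.Adj t q) (h : f s(t, p) = f s(t, q)) : p = q := by
  by_contra hne; exact proper_ne hf hp hq hne h

/-- The Kempe subgraph on colors `a`, `b`. -/
def Kg (W : SimpleGraph V) (f : Sym2 V → ℕ) (a b : ℕ) : SimpleGraph V where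
  Adj p q := W.Adj p q ∧ (f s(p, q) = a ∨ f s(p, q) = b)
  symm := ⟨fun p q h => ⟨h.1.symm, by rw [Sym2.eq_swap]; exact h.2⟩⟩
  loopless := ⟨fun p h => W.loopless.irrefl p h.1⟩

lemma kg_adj {W : SimpleGraph V} {f : Sym2 V → ℕ} {a b : ℕ} {p q : V} :
    (Kg W f a b).Adj p q ↔ W.Adj p q ∧ (f s(p, q) = a ∨ f s(p, q) = b) := Iff.rfl

/-- Extending a coloring of `G - uv` by a common missing color contradicts criticality. -/
lemma no_extend {G : SimpleGraph V} [Fintype V] {Δ : ℕ} (hc : EdgeCritical G Δ)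
    {u v : V} (huv : G.Adj u v) {f : Sym2 V → ℕ}
    (hf : IsProperEdgeColoring (G.deleteEdges {s(u, v)}) Δ f) {c : ℕ}
    (hcu : c ∈ missing (G.deleteEdges {s(u, v)}) Δ f u)
    (hcv : c ∈ missing (G.deleteEdges {s(u, v)}) Δ f v) : False := by
  set W := G.deleteEdges {s(u, v)} with hW
  have key : ∀ g ∈ G.edgeSet, g ≠ s(u, v) → ∀ t, t ∈ g → (t = u ∨ t = v) → f g ≠ c := by
    intro g hg hgne t htg htuv
    obtain ⟨q, rfl⟩ := Sym2.mem_iff_exists.1 htg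
    have hWadj : W.Adj t q := by
      rw [hW, SimpleGraph.deleteEdges_adj]
      exact ⟨G.mem_edgeSet.1 hg, by simpa using hgne⟩
    rcases htuv with rfl | rfl
    · exact (mem_missing.1 hcu).2 q hWadj
    · exact (mem_missing.1 hcv).2 q hWadj
  apply hc.2.1
  refine ⟨fun e => if e = s(u, v) then c else f e, ?_, ?_⟩
  · intro e he
    by_cases h : e = s(u, v)
    · simpa [h] using (mem_missing.1 hcu).1
    · have : e ∈ W.edgeSet := by
        rw [hW, SimpleGraph.edgeSet_deleteEdges]; exact ⟨he, by simpa using h⟩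
      simpa [h] using hf.1 e this
  · intro e he g hg hne ⟨t, hte, htg⟩
    by_cases h1 : e = s(u, v) <;> by_cases h2 : g = s(u, v)
    · exact absurd (h1.trans h2.symm) hne
    · have htuv : t = u ∨ t = v := by subst h1; simpa using hte
      simp only [h1, if_pos rfl, if_neg h2]
      exact fun hcg => key g hg h2 t htg htuv hcg.symm
    · have htuv : t = u ∨ t = v := by subst h2; simpa using htg
      simp only [h2, if_pos rfl, if_neg h1]
      exact key e he h1 t hte htuv
    · have he' : e ∈ W.edgeSet := by
        rw [hW, SimpleGraph.edgeSet_deleteEdges]; exact ⟨he, by simpa using h1⟩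
      have hg' : g ∈ W.edgeSet := by
        rw [hW, SimpleGraph.edgeSet_deleteEdges]; exact ⟨hg, by simpa using h2⟩
      simpa [h1, h2] using hf.2 e he' g hg' hne ⟨t, hte, htg⟩

noncomputable def swapf (W : SimpleGraph V) (f : Sym2 V → ℕ) (a b : ℕ) (v0 : V) :
    Sym2 V → ℕ :=
  fun e => if (e ∈ (Kg W f a b).edgeSet ∧ ∃ p, p ∈ e ∧ (Kg W f a b).Reachable v0 p)
    then (if f e = a then b else a) else f e

lemma swapf_cond_iff {W : SimpleGraph V} {f : Sym2 V → ℕ} {a b : ℕ} {v0 t p : V} :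
    (s(t, p) ∈ (Kg W f a b).edgeSet ∧ ∃ q, q ∈ s(t, p) ∧ (Kg W f a b).Reachable v0 q)
      ↔ ((Kg W f a b).Adj t p ∧ (Kg W f a b).Reachable v0 t) := by
  constructor
  · rintro ⟨he, q, hq, hr⟩
    have hadj : (Kg W f a b).Adj t p := (Kg W f a b).mem_edgeSet.1 he
    refine ⟨hadj, ?_⟩
    rcases Sym2.mem_iff.1 hq with rfl | rfl
    · exact hr
    · exact hr.trans hadj.symm.reachable
  · rintro ⟨hadj, hr⟩
    exact ⟨(Kg W f a b).mem_edgeSet.2 hadj, t, by simp, hr⟩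

lemma swapf_pos {W : SimpleGraph V} {f : Sym2 V → ℕ} {a b : ℕ} {v0 t p : V}
    (h : (Kg W f a b).Adj t p ∧ (Kg W f a b).Reachable v0 t) :
    swapf W f a b v0 s(t, p) = if f s(t, p) = a then b else a := by
  rw [swapf, if_pos (swapf_cond_iff.2 h)]

lemma swapf_neg {W : SimpleGraph V} {f : Sym2 V → ℕ} {a b : ℕ} {v0 t p : V}
    (h : ¬ ((Kg W f a b).Adj t p ∧ (Kg W f a b).Reachable v0 t)) :
    swapf W f a b v0 s(t, p) = f s(t, p) := by
  rw [swapf, if_neg (fun hc => h (swapf_cond_iff.1 hc))]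

lemma swapf_proper {W : SimpleGraph V} {k : ℕ} {f : Sym2 V → ℕ} {a b : ℕ} {v0 : V}
    (hf : IsProperEdgeColoring W k f) (ha : a ∈ Finset.Icc 1 k) (hb : b ∈ Finset.Icc 1 k)
    (hab : a ≠ b) : IsProperEdgeColoring W k (swapf W f a b v0) := by
  constructor
  · intro e he
    rw [swapf]
    split
    · split <;> assumption
    · exact hf.1 e he
  · intro e he g hg hne ⟨t, hte, htg⟩
    obtain ⟨p, rfl⟩ := Sym2.mem_iff_exists.1 hte
    obtain ⟨q, rfl⟩ := Sym2.mem_iff_exists.1 htg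
    have hWp : W.Adj t p := W.mem_edgeSet.1 he
    have hWq : W.Adj t q := W.mem_edgeSet.1 hg
    have hpq : p ≠ q := fun h => hne (by rw [h])
    have hold : f s(t, p) ≠ f s(t, q) := proper_ne hf hWp hWq hpq
    by_cases h1 : ((Kg W f a b).Adj t p ∧ (Kg W f a b).Reachable v0 t) <;>
      by_cases h2 : ((Kg W f a b).Adj t q ∧ (Kg W f a b).Reachable v0 t)
    · rw [swapf_pos h1, swapf_pos h2]
      rcases h1.1.2 with hp' | hp' <;> rcases h2.1.2 with hq' | hq' <;>
        simp_all [hab, Ne.symm hab]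
    · rw [swapf_pos h1, swapf_neg h2]
      have : f s(t, q) ≠ a ∧ f s(t, q) ≠ b := by
        constructor <;> intro hcq
        · exact h2 ⟨⟨hWq, Or.inl hcq⟩, h1.2⟩
        · exact h2 ⟨⟨hWq, Or.inr hcq⟩, h1.2⟩
      rcases this with ⟨hna, hnb⟩
      split
      · exact fun h => hnb h.symm
      · exact fun h => hna h.symm
    · rw [swapf_neg h1, swapf_pos h2]
      have : f s(t, p) ≠ a ∧ f s(t, p) ≠ b := by
        constructor <;> intro hcp
        · exact h1 ⟨⟨hWp, Or.inl hcp⟩, h2.2⟩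
        · exact h1 ⟨⟨hWp, Or.inr hcp⟩, h2.2⟩
      rcases this with ⟨hna, hnb⟩
      split
      · exact fun h => hnb h
      · exact fun h => hna h
    · rw [swapf_neg h1, swapf_neg h2]; exact hold

lemma swapf_not_reach {W : SimpleGraph V} {f : Sym2 V → ℕ} {a b : ℕ} {v0 t : V}
    (h : ¬ (Kg W f a b).Reachable v0 t) (q : V) :
    swapf W f a b v0 s(t, q) = f s(t, q) :=
  swapf_neg (fun hc => h hc.2)

lemma swapf_missing {W : SimpleGraph V} {k : ℕ} {f : Sym2 V → ℕ} {a b : ℕ} {v0 t : V}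
    (hb : b ∈ Finset.Icc 1 k) (hab : a ≠ b)
    (hreach : (Kg W f a b).Reachable v0 t) (hmiss : a ∈ missing W k f t) :
    b ∈ missing W k (swapf W f a b v0) t := by
  rw [mem_missing]
  refine ⟨hb, fun q hq => ?_⟩
  by_cases h1 : ((Kg W f a b).Adj t q ∧ (Kg W f a b).Reachable v0 t)
  · rw [swapf_pos h1]
    have hne : f s(t, q) ≠ a := (mem_missing.1 hmiss).2 q hq
    rcases h1.1.2 with h' | h'
    · exact absurd h' hne
    · rw [if_neg hne]; exact hab
  · rw [swapf_neg h1]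
    intro hcb
    exact h1 ⟨⟨hq, Or.inr hcb⟩, hreach⟩

/-- The fundamental Kempe-chain lemma for a critical edge. -/
lemma same_component {G : SimpleGraph V} [Fintype V] {Δ : ℕ} (hc : EdgeCritical G Δ)
    {u v : V} (huv : G.Adj u v) {f : Sym2 V → ℕ}
    (hf : IsProperEdgeColoring (G.deleteEdges {s(u, v)}) Δ f) {a b : ℕ}
    (hau : a ∈ missing (G.deleteEdges {s(u, v)}) Δ f u)
    (hbv : b ∈ missing (G.deleteEdges {s(u, v)}) Δ f v) :
    (Kg (G.deleteEdges {s(u, v)}) f a b).Reachable u v := by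
  set W := G.deleteEdges {s(u, v)} with hW
  have hab : a ≠ b := by rintro rfl; exact no_extend hc huv hf hau hbv
  by_contra hnr
  have hf' : IsProperEdgeColoring W Δ (swapf W f a b u) :=
    swapf_proper hf (mem_missing.1 hau).1 (mem_missing.1 hbv).1 hab
  have h1 : b ∈ missing W Δ (swapf W f a b u) u :=
    swapf_missing (mem_missing.1 hbv).1 hab (SimpleGraph.Reachable.refl u) hau
  have h2 : b ∈ missing W Δ (swapf W f a b u) v := by
    rw [mem_missing]
    refine ⟨(mem_missing.1 hbv).1, fun q hq => ?_⟩
    rw [swapf_not_reach hnr q]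
    exact (mem_missing.1 hbv).2 q hq
  exact no_extend hc huv hf' h1 h2

/-- Walking to `y0` whose unique neighbor is `u0`: strip the last edge. -/
lemma strip_y {A D : SimpleGraph V} {y0 u0 : V} (hu : ∀ q, A.Adj y0 q → q = u0)
    (hoff : ∀ a b, A.Adj a b → a ≠ y0 → b ≠ y0 → D.Adj a b) :
    ∀ {v : V}, A.Reachable v y0 → v ≠ y0 → D.Reachable v u0 := by
  have main : ∀ (v z : V) (W : A.Walk v z), y0 = z → v ≠ y0 → D.Reachable v u0 := by
    intro v z W
    induction W with
    | nil => intro hz h; exact absurd hz.symm h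
    | @cons a1 b1 c1 hadj W ih =>
      intro hz hne
      subst hz
      by_cases hq : b1 = y0
      · subst hq
        have h2 : a1 = u0 := hu a1 hadj.symm
        subst h2
        exact SimpleGraph.Reachable.refl _
      · exact (SimpleGraph.Adj.reachable (hoff _ _ hadj hne hq)).trans (ih rfl hq)
  intro v hv hne
  obtain ⟨W⟩ := hv
  exact main v y0 W rfl hne

lemma path_cmp {A : SimpleGraph V}
    (hdeg : ∀ t q r s, A.Adj t q → A.Adj t r → A.Adj t s → q = r ∨ q = s ∨ r = s) :
    ∀ {a v : V} (P : A.Walk a v) (w : V) (Q : A.Walk a w) (g : V), P.IsPath → Q.IsPath →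
      A.Adj a g → g ∉ P.support → g ∉ Q.support →
      (∀ q r, A.Adj v q → A.Adj v r → q = r) → (∀ q r, A.Adj w q → A.Adj w r → q = r) →
      v = w := by
  intro a v P
  induction P with
  | @nil a =>
    intro w Q g hP hQ hg hgP hgQ hv hw
    cases Q with
    | nil => rfl
    | @cons _ c _ h2 Q' =>
      exfalso
      have : c = g := hv c g h2 hg
      subst this
      exact hgQ (by simp [SimpleGraph.Walk.support_cons,
        SimpleGraph.Walk.start_mem_support Q'])
  | @cons a m v h P' ih =>
    intro w Q g hP hQ hg hgP hgQ hv hw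
    cases Q with
    | nil =>
      exfalso
      have : m = g := hw m g h hg
      subst this
      exact hgP (by simp [SimpleGraph.Walk.support_cons,
        SimpleGraph.Walk.start_mem_support P'])
    | @cons _ c _ h2 Q' =>
      have hmP : m ∈ (SimpleGraph.Walk.cons h P').support := by
        simp [SimpleGraph.Walk.support_cons, SimpleGraph.Walk.start_mem_support P']
      have hcQ : c ∈ (SimpleGraph.Walk.cons h2 Q').support := by
        simp [SimpleGraph.Walk.support_cons, SimpleGraph.Walk.start_mem_support Q']
      have hmc : m = c := by
        rcases hdeg a m c g h h2 hg with h' | h' | h'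
        · exact h'
        · exact absurd (h' ▸ hmP) hgP
        · exact absurd (h' ▸ hcQ) hgQ
      subst hmc
      have hP' : P'.IsPath := ((SimpleGraph.Walk.cons_isPath_iff h P').1 hP).1
      have haP : a ∉ P'.support := ((SimpleGraph.Walk.cons_isPath_iff h P').1 hP).2
      have hQ' : Q'.IsPath := ((SimpleGraph.Walk.cons_isPath_iff h2 Q').1 hQ).1
      have haQ : a ∉ Q'.support := ((SimpleGraph.Walk.cons_isPath_iff h2 Q').1 hQ).2
      exact ih w Q' a hP' hQ' h.symm haP haQ hv hw

/-- A component of a graph with max degree ≤ 2 cannot contain three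
"endpoints" (vertices of degree ≤ 1). -/
lemma three {A : SimpleGraph V}
    (hdeg : ∀ t q r s, A.Adj t q → A.Adj t r → A.Adj t s → q = r ∨ q = s ∨ r = s)
    {u v w : V}
    (hu : ∀ q r, A.Adj u q → A.Adj u r → q = r)
    (hv : ∀ q r, A.Adj v q → A.Adj v r → q = r)
    (hw : ∀ q r, A.Adj w q → A.Adj w r → q = r)
    (huv : u ≠ v) (huw : u ≠ w) (hvw : v ≠ w)
    (h1 : A.Reachable u v) (h2 : A.Reachable u w) : False := by
  classical
  obtain ⟨P0⟩ := h1
  obtain ⟨Q0⟩ := h2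
  set P : A.Path u v := P0.toPath with hP
  set Q : A.Path u w := Q0.toPath with hQ
  rcases P with ⟨Pw, hPw⟩
  rcases Q with ⟨Qw, hQw⟩
  cases Pw with
  | nil => exact huv rfl
  | @cons _ m _ h P' =>
    cases Qw with
    | nil => exact huw rfl
    | @cons _ c _ h2' Q' =>
      have hmc : m = c := hu m c h h2'
      subst hmc
      have hP' : P'.IsPath := ((SimpleGraph.Walk.cons_isPath_iff h P').1 hPw).1
      have huP : u ∉ P'.support := ((SimpleGraph.Walk.cons_isPath_iff h P').1 hPw).2
      have hQ' : Q'.IsPath := ((SimpleGraph.Walk.cons_isPath_iff h2' Q').1 hQw).1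
      have huQ : u ∉ Q'.support := ((SimpleGraph.Walk.cons_isPath_iff h2' Q').1 hQw).2
      exact hvw (path_cmp hdeg P' w Q' u hP' hQ' h.symm huP huQ hv hw)

/-- Recoloring that moves the uncolored slot from `yp` to `yz`. -/
lemma recolor_proper {G : SimpleGraph V} {Δ : ℕ} {y p z : V} {f₀ : Sym2 V → ℕ}
    (hp : IsProperEdgeColoring (G.deleteEdges {s(y, p)}) Δ f₀)
    (hGyp : G.Adj y p) (hGyz : G.Adj y z) (hpz : p ≠ z) {c : ℕ}
    (hcI : c ∈ Finset.Icc 1 Δ) (hcz : f₀ s(y, z) = c)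
    (hczM : ∀ q, G.Adj p q → q ≠ y → f₀ s(p, q) ≠ c) :
    IsProperEdgeColoring (G.deleteEdges {s(y, z)}) Δ
      (fun e => if e = s(y, p) then c else f₀ e) := by
  have hyz_mem : s(y, z) ∈ (G.deleteEdges {s(y, p)}).edgeSet := by
    rw [SimpleGraph.mem_edgeSet, SimpleGraph.deleteEdges_adj]
    exact ⟨hGyz, fun hmem => hpz (Sym2.congr_right.1 (Set.mem_singleton_iff.1 hmem)).symm⟩
  have key : ∀ g ∈ (G.deleteEdges {s(y, z)}).edgeSet, g ≠ s(y, p) →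
      (∃ t, t ∈ g ∧ t ∈ s(y, p)) → f₀ g ≠ c := by
    intro g hg hne ⟨t, htg, htp⟩
    have hgG : g ∈ G.edgeSet ∧ g ∉ ({s(y, z)} : Set (Sym2 V)) := by
      rwa [SimpleGraph.edgeSet_deleteEdges] at hg
    rcases Sym2.mem_iff.1 htp with h | h
    · -- t = y : edge s(y,q) with q ≠ p, q ≠ z
      have htg' : y ∈ g := h ▸ htg
      obtain ⟨q, rfl⟩ := Sym2.mem_iff_exists.1 htg'
      have hq_ne_p : q ≠ p := fun h => hne (by rw [h])
      have hq_ne_z : q ≠ z := by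
        intro h; exact hgG.2 (Set.mem_singleton_iff.2 (by rw [h]))
      have h1 : (G.deleteEdges {s(y, p)}).Adj y q := by
        rw [SimpleGraph.deleteEdges_adj]
        exact ⟨G.mem_edgeSet.1 hgG.1, by
          simp only [Set.mem_singleton_iff, Sym2.congr_right]; exact hq_ne_p⟩
      rw [← hcz]
      exact proper_ne hp h1 ((SimpleGraph.deleteEdges_adj).2
        ⟨hGyz, fun hmem => hpz (Sym2.congr_right.1 (Set.mem_singleton_iff.1 hmem)).symm⟩) hq_ne_z
    · -- t = p : edge s(p,q) with q ≠ y
      have htg' : p ∈ g := h ▸ htg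
      obtain ⟨q, rfl⟩ := Sym2.mem_iff_exists.1 htg'
      have hq_ne_y : q ≠ y := by
        rintro rfl
        exact hne (Sym2.eq_swap)
      exact hczM q (G.mem_edgeSet.1 hgG.1) hq_ne_y
  constructor
  · intro e he
    by_cases h : e = s(y, p)
    · simpa [h] using hcI
    · have : e ∈ G.edgeSet ∧ e ∉ ({s(y, z)} : Set (Sym2 V)) := by
        rwa [SimpleGraph.edgeSet_deleteEdges] at he
      have h2 : e ∈ (G.deleteEdges {s(y, p)}).edgeSet := by
        rw [SimpleGraph.edgeSet_deleteEdges]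
        exact ⟨this.1, by simpa using h⟩
      simpa [h] using hp.1 e h2
  · intro e he g hg hne ⟨t, hte, htg⟩
    by_cases h1 : e = s(y, p) <;> by_cases h2 : g = s(y, p)
    · exact absurd (h1.trans h2.symm) hne
    · simp only [h1, if_pos rfl, if_neg h2]
      exact fun h => key g hg h2 ⟨t, htg, h1 ▸ hte⟩ h.symm
    · simp only [h2, if_pos rfl, if_neg h1]
      exact key e he h1 ⟨t, hte, h2 ▸ htg⟩
    · have he' : e ∈ (G.deleteEdges {s(y, p)}).edgeSet := by
        rw [SimpleGraph.edgeSet_deleteEdges]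
        rw [SimpleGraph.edgeSet_deleteEdges] at he
        exact ⟨he.1, by simpa using h1⟩
      have hg' : g ∈ (G.deleteEdges {s(y, p)}).edgeSet := by
        rw [SimpleGraph.edgeSet_deleteEdges]
        rw [SimpleGraph.edgeSet_deleteEdges] at hg
        exact ⟨hg.1, by simpa using h2⟩
      simpa [h1, h2] using hp.2 e he' g hg' hne ⟨t, hte, htg⟩

/-- Graph with all edges at `y0` removed. -/
def offY (A : SimpleGraph V) (y0 : V) : SimpleGraph V where
  Adj a b := A.Adj a b ∧ a ≠ y0 ∧ b ≠ y0
  symm := ⟨fun a b h => ⟨h.1.symm, h.2.2, h.2.1⟩⟩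
  loopless := ⟨fun a h => A.loopless.irrefl a h.1⟩

lemma offY_le {A : SimpleGraph V} {y0 : V} : offY A y0 ≤ A := fun _ _ h => h.1

/-- Chains of the Vizing multifan at `y`, rooted at `x`. The head is the
current endpoint; the last element is always `x`. -/
inductive IsChain (G : SimpleGraph V) (Δ : ℕ) (x y : V) (f : Sym2 V → ℕ) :
    V → List V → Prop where
  | base : IsChain G Δ x y f x []
  | cons {z p : V} {l : List V} : IsChain G Δ x y f p l → z ∉ p :: l →
      (G.deleteEdges {s(x, y)}).Adj y z →
      f s(y, z) ∈ missing (G.deleteEdges {s(x, y)}) Δ f p →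
      IsChain G Δ x y f z (p :: l)

/-- The fan-shifted coloring along a chain. -/
noncomputable def shiftC (y : V) (f : Sym2 V → ℕ) : List V → Sym2 V → ℕ
  | [] => f
  | [_] => f
  | z :: p :: l => fun e => if e = s(y, p) then f s(y, z) else shiftC y f (p :: l) e
termination_by l => l.length

section Chains

variable {G : SimpleGraph V} {Δ : ℕ} {x y : V} {f : Sym2 V → ℕ}

lemma shiftC_single (y : V) (f : Sym2 V → ℕ) (z : V) : shiftC y f [z] = f := by
  simp [shiftC]

lemma shiftC_cons (y : V) (f : Sym2 V → ℕ) (z p : V) (l : List V) (e : Sym2 V) :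
    shiftC y f (z :: p :: l) e = if e = s(y, p) then f s(y, z) else shiftC y f (p :: l) e := by
  rw [shiftC]

lemma not_adj_del_yx : ¬ (G.deleteEdges {s(x, y)}).Adj y x := by
  rw [SimpleGraph.deleteEdges_adj]
  rintro ⟨-, h⟩
  exact h (Set.mem_singleton_iff.2 Sym2.eq_swap)

lemma del_adj_G {u v : V} {s : Set (Sym2 V)} (h : (G.deleteEdges s).Adj u v) : G.Adj u v :=
  ((SimpleGraph.deleteEdges_adj).1 h).1

lemma adj_del_of_ne {u v : V} (h : G.Adj u v) (hne : s(u, v) ≠ s(x, y)) :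
    (G.deleteEdges {s(x, y)}).Adj u v :=
  (SimpleGraph.deleteEdges_adj).2 ⟨h, fun hm => hne (Set.mem_singleton_iff.1 hm)⟩

lemma chain_nodup {w : V} {l : List V} (h : IsChain G Δ x y f w l) : (w :: l).Nodup := by
  induction h with
  | base => simp
  | cons hsub hnot hadj hmiss ih => exact List.nodup_cons.2 ⟨hnot, ih⟩

lemma chain_ne_y {w : V} {l : List V} (hxy : G.Adj x y) (h : IsChain G Δ x y f w l) :
    ∀ v ∈ w :: l, v ≠ y := by
  induction h with
  | base => intro v hv; simp at hv; subst hv; exact hxy.ne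
  | @cons z p l hsub hnot hadj hmiss ih =>
    intro v hv
    rcases List.mem_cons.1 hv with rfl | hv'
    · exact ((del_adj_G hadj).ne).symm
    · exact ih v hv'

lemma chain_adjG {w : V} {l : List V} (hxy : G.Adj x y) (h : IsChain G Δ x y f w l) :
    G.Adj y w := by
  cases h with
  | base => exact hxy.symm
  | cons hsub hnot hadj hmiss => exact del_adj_G hadj

lemma chain_succ {w : V} {l : List V} (h : IsChain G Δ x y f w l) :
    ∀ u, u ∈ w :: l → (G.deleteEdges {s(x, y)}).Adj y u →
      ∃ L₁ pu L₂, w :: l = L₁ ++ u :: pu :: L₂ ∧ IsChain G Δ x y f pu L₂ ∧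
        f s(y, u) ∈ missing (G.deleteEdges {s(x, y)}) Δ f pu := by
  induction h with
  | base =>
    intro u hu hadju
    simp at hu; subst hu
    exact absurd hadju not_adj_del_yx
  | @cons z p l hsub hnot hadj hmiss ih =>
    intro u hu hadju
    rcases List.mem_cons.1 hu with rfl | hu'
    · exact ⟨[], p, l, rfl, hsub, hmiss⟩
    · obtain ⟨L₁, pu, L₂, heq, hch, hm⟩ := ih u hu' hadju
      exact ⟨z :: L₁, pu, L₂, by rw [List.cons_append, ← heq], hch, hm⟩

lemma shift_off {w : V} {l : List V} (h : IsChain G Δ x y f w l) :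
    ∀ e : Sym2 V, y ∉ e → shiftC y f (w :: l) e = f e := by
  induction h with
  | base => intro e he; rw [shiftC_single]
  | @cons z p l hsub hnot hadj hmiss ih =>
    intro e he
    have hne : e ≠ s(y, p) := by
      rintro rfl; exact he (by simp)
    rw [shiftC_cons, if_neg hne]
    exact ih e he

lemma shift_nonchain {w : V} {l : List V} (h : IsChain G Δ x y f w l) :
    ∀ q, q ∉ w :: l → shiftC y f (w :: l) s(y, q) = f s(y, q) := by
  induction h with
  | base => intro q hq; rw [shiftC_single]
  | @cons z p l hsub hnot hadj hmiss ih =>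
    intro q hq
    have hqp : q ≠ p := fun h' => hq (by rw [h']; exact List.mem_cons_of_mem _ (List.mem_cons_self))
    rw [shiftC_cons, if_neg (fun h' => hqp (Sym2.congr_right.1 h'))]
    exact ih q (fun h' => hq (List.mem_cons_of_mem _ h'))

lemma shift_y_colors {w : V} {l : List V} (h : IsChain G Δ x y f w l) :
    ∀ q, (G.deleteEdges {s(y, w)}).Adj y q →
      ∃ t, (G.deleteEdges {s(x, y)}).Adj y t ∧ shiftC y f (w :: l) s(y, q) = f s(y, t) := by
  induction h with
  | base =>
    intro q hq
    refine ⟨q, ?_, by rw [shiftC_single]⟩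
    refine adj_del_of_ne (del_adj_G hq) ?_
    intro heq
    apply ((SimpleGraph.deleteEdges_adj).1 hq).2
    rw [heq, Sym2.eq_swap]
    rfl
  | @cons z p l hsub hnot hadj hmiss ih =>
    intro q hq
    by_cases hqp : q = p
    · subst hqp
      refine ⟨z, hadj, ?_⟩
      rw [shiftC_cons, if_pos rfl]
    · rw [shiftC_cons, if_neg (fun h' => hqp (Sym2.congr_right.1 h'))]
      apply ih q
      rw [SimpleGraph.deleteEdges_adj]
      refine ⟨del_adj_G hq, ?_⟩
      intro hmem
      exact hqp (Sym2.congr_right.1 (Set.mem_singleton_iff.1 hmem))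

lemma shift_pair {w : V} {l : List V} (h : IsChain G Δ x y f w l) :
    ∀ (L₁ : List V) (u pu : V) (L₂ : List V), w :: l = L₁ ++ u :: pu :: L₂ →
      shiftC y f (w :: l) s(y, pu) = f s(y, u) := by
  induction h with
  | base =>
    intro L₁ u pu L₂ heq
    have := congrArg List.length heq
    simp at this
    omega
  | @cons z p l hsub hnot hadj hmiss ih =>
    intro L₁ u pu L₂ heq
    cases L₁ with
    | nil =>
      simp only [List.nil_append, List.cons.injEq] at heq
      obtain ⟨rfl, rfl, rfl⟩ := heq
      rw [shiftC_cons, if_pos rfl]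
    | cons a L₁' =>
      simp only [List.cons_append, List.cons.injEq] at heq
      obtain ⟨rfl, heq2⟩ := heq
      have hpu_mem : pu ∈ l := by
        cases L₁' with
        | nil =>
          simp only [List.nil_append, List.cons.injEq] at heq2
          rw [heq2.2]; exact List.mem_cons_self
        | cons b L =>
          simp only [List.cons_append, List.cons.injEq] at heq2
          rw [heq2.2]
          exact List.mem_append_right _ (List.mem_cons_of_mem _ (List.mem_cons_self))
      have hpup : pu ≠ p := by
        intro h'
        have := chain_nodup hsub
        rw [List.nodup_cons] at this
        exact this.1 (h' ▸ hpu_mem)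
      rw [shiftC_cons, if_neg (fun h' => hpup (Sym2.congr_right.1 h'))]
      exact ih L₁' u pu L₂ heq2

lemma shift_proper (hf : IsProperEdgeColoring (G.deleteEdges {s(x, y)}) Δ f)
    (hxy : G.Adj x y) {w : V} {l : List V} (h : IsChain G Δ x y f w l) :
    IsProperEdgeColoring (G.deleteEdges {s(y, w)}) Δ (shiftC y f (w :: l)) := by
  induction h with
  | base =>
    rw [shiftC_single, show s(y, x) = s(x, y) from Sym2.eq_swap]
    exact hf
  | @cons z p l hsub hnot hadj hmiss ih =>
    have hGyp : G.Adj y p := chain_adjG hxy hsub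
    have hGyz : G.Adj y z := del_adj_G hadj
    have hpz : p ≠ z := fun h' => hnot (h' ▸ List.mem_cons_self)
    have hpy : p ≠ y := chain_ne_y hxy hsub p (List.mem_cons_self)
    have hcz : shiftC y f (p :: l) s(y, z) = f s(y, z) := shift_nonchain hsub z hnot
    have hczM : ∀ q, G.Adj p q → q ≠ y → shiftC y f (p :: l) s(p, q) ≠ f s(y, z) := by
      intro q hq hqy
      have hoff : shiftC y f (p :: l) s(p, q) = f s(p, q) := by
        apply shift_off hsub
        intro hy
        rcases Sym2.mem_iff.1 hy with h' | h'
        · exact hpy h'.symm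
        · exact hqy h'.symm
      rw [hoff]
      apply (mem_missing.1 hmiss).2 q
      apply adj_del_of_ne hq
      intro heq
      rcases Sym2.eq_iff.1 heq with ⟨rfl, rfl⟩ | ⟨rfl, rfl⟩
      · exact hqy rfl
      · exact hpy rfl
    have hres := recolor_proper ih hGyp hGyz hpz (mem_missing.1 hmiss).1 hcz hczM
    have hfun : shiftC y f (z :: p :: l) =
        fun e => if e = s(y, p) then f s(y, z) else shiftC y f (p :: l) e :=
      funext fun e => shiftC_cons y f z p l e
    rw [hfun]
    exact hres

end Chains

lemma kg_comm {W : SimpleGraph V} {f : Sym2 V → ℕ} {a b : ℕ} :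
    Kg W f a b = Kg W f b a := by
  ext p q
  exact and_congr_right fun _ => or_comm

section Claims

variable {G : SimpleGraph V} [Fintype V] {Δ : ℕ} {x y : V} {f : Sym2 V → ℕ}

lemma shift_missing_end (hxy : G.Adj x y) {w : V} {l : List V}
    (h : IsChain G Δ x y f w l) {c : ℕ}
    (hcw : c ∈ missing (G.deleteEdges {s(x, y)}) Δ f w) :
    c ∈ missing (G.deleteEdges {s(y, w)}) Δ (shiftC y f (w :: l)) w := by
  rw [mem_missing]
  refine ⟨(mem_missing.1 hcw).1, fun q hq => ?_⟩
  have hwy : w ≠ y := chain_ne_y hxy h w (List.mem_cons_self)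
  have hqy : q ≠ y := by
    rintro rfl
    exact ((SimpleGraph.deleteEdges_adj).1 hq).2
      (Set.mem_singleton_iff.2 Sym2.eq_swap)
  have hoff : shiftC y f (w :: l) s(w, q) = f s(w, q) := by
    apply shift_off h
    intro hy
    rcases Sym2.mem_iff.1 hy with h' | h'
    · exact hwy h'.symm
    · exact hqy h'.symm
  rw [hoff]
  apply (mem_missing.1 hcw).2 q
  apply adj_del_of_ne (del_adj_G hq)
  intro heq
  rcases Sym2.eq_iff.1 heq with ⟨rfl, rfl⟩ | ⟨rfl, rfl⟩
  · exact hqy rfl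
  · exact hwy rfl

lemma shift_missing_y {w : V} {l : List V} (h : IsChain G Δ x y f w l) {c : ℕ}
    (hcy : c ∈ missing (G.deleteEdges {s(x, y)}) Δ f y) :
    c ∈ missing (G.deleteEdges {s(y, w)}) Δ (shiftC y f (w :: l)) y := by
  rw [mem_missing]
  refine ⟨(mem_missing.1 hcy).1, fun q hq => ?_⟩
  obtain ⟨t, ht, heq⟩ := shift_y_colors h q hq
  rw [heq]
  exact (mem_missing.1 hcy).2 t ht

lemma chain_missing_y (hc : EdgeCritical G Δ) (hxy : G.Adj x y)
    (hf : IsProperEdgeColoring (G.deleteEdges {s(x, y)}) Δ f)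
    {w : V} {l : List V} (h : IsChain G Δ x y f w l) {c : ℕ}
    (hcw : c ∈ missing (G.deleteEdges {s(x, y)}) Δ f w)
    (hcy : c ∈ missing (G.deleteEdges {s(x, y)}) Δ f y) : False :=
  no_extend hc (chain_adjG hxy h) (shift_proper hf hxy h)
    (shift_missing_y h hcy) (shift_missing_end hxy h hcw)

lemma chain_reach (hc : EdgeCritical G Δ) (hxy : G.Adj x y)
    (hf : IsProperEdgeColoring (G.deleteEdges {s(x, y)}) Δ f) {δ : ℕ}
    (hδ : δ ∈ missing (G.deleteEdges {s(x, y)}) Δ f y) :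
    ∀ (n : ℕ) {w : V} {l : List V}, IsChain G Δ x y f w l → (w :: l).length ≤ n →
      ∀ {α : ℕ}, α ∈ missing (G.deleteEdges {s(x, y)}) Δ f w →
        (Kg (G.deleteEdges {s(x, y)}) f α δ).Reachable w y := by
  intro n
  induction n with
  | zero => intro w l hch hlen; simp at hlen
  | succ n ih =>
    intro w l hch0 hlen α hα
    cases hch0 with
    | base => exact same_component hc hxy hf hα hδ
    | cons hsub hnot hadj hmiss =>
      rename_i p l'
      have hch : IsChain G Δ x y f w (p :: l') := IsChain.cons hsub hnot hadj hmiss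
      have hGyz : G.Adj y w := del_adj_G hadj
      have hzy : w ≠ y := hGyz.ne'
      -- the α-neighbor u of y
      have hαy : ∃ u, (G.deleteEdges {s(x, y)}).Adj y u ∧ f s(y, u) = α := by
        by_contra hcon
        push_neg at hcon
        have hmem : α ∈ missing (G.deleteEdges {s(x, y)}) Δ f y :=
          mem_missing.2 ⟨(mem_missing.1 hα).1, fun u hu => hcon u hu⟩
        exact chain_missing_y hc hxy hf hch hα hmem
      obtain ⟨u, huadj, hufα⟩ := hαy
      have hu_ne_z : u ≠ w := by
        rintro rfl
        exact (mem_missing.1 hα).2 y huadj.symm (by rw [Sym2.eq_swap]; exact hufα)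
      have hproper' : IsProperEdgeColoring (G.deleteEdges {s(y, w)}) Δ
          (shiftC y f (w :: p :: l')) := shift_proper hf hxy hch
      have hm1 : α ∈ missing (G.deleteEdges {s(y, w)}) Δ (shiftC y f (w :: p :: l')) w :=
        shift_missing_end hxy hch hα
      have hm2 : δ ∈ missing (G.deleteEdges {s(y, w)}) Δ (shiftC y f (w :: p :: l')) y :=
        shift_missing_y hch hδ
      have hreach0 : (Kg (G.deleteEdges {s(y, w)}) (shiftC y f (w :: p :: l')) δ α).Reachable y w :=
        same_component hc hGyz hproper' hm2 hm1
      have hreach'' : (Kg (G.deleteEdges {s(y, w)}) (shiftC y f (w :: p :: l')) α δ).Reachable w y := by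
        rw [kg_comm]; exact hreach0.symm
      -- unique neighbor of y in A
      have hAy : ∀ q, (Kg (G.deleteEdges {s(x, y)}) f α δ).Adj y q → q = u := by
        intro q hq
        rcases hq.2 with hcol | hcol
        · exact proper_unique hf hq.1 huadj (hcol.trans hufα.symm)
        · exact absurd hcol ((mem_missing.1 hδ).2 q hq.1)
      have hAyu : (Kg (G.deleteEdges {s(x, y)}) f α δ).Adj y u := ⟨huadj, Or.inl hufα⟩
      have hoffA' : ∀ a b, (Kg (G.deleteEdges {s(y, w)}) (shiftC y f (w :: p :: l')) α δ).Adj a b →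
          a ≠ y → b ≠ y → (offY (Kg (G.deleteEdges {s(x, y)}) f α δ) y).Adj a b := by
        intro a b hab hay hby
        refine ⟨⟨?_, ?_⟩, hay, hby⟩
        · apply adj_del_of_ne (del_adj_G hab.1)
          intro heq
          rcases Sym2.eq_iff.1 heq with ⟨rfl, rfl⟩ | ⟨rfl, rfl⟩
          · exact hby rfl
          · exact hay rfl
        · have hoff : shiftC y f (w :: p :: l') s(a, b) = f s(a, b) := by
            apply shift_off hch
            intro hy
            rcases Sym2.mem_iff.1 hy with h' | h'
            · exact hay h'.symm
            · exact hby h'.symm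
          rw [← hoff]
          exact hab.2
      by_cases hu_mem : u ∈ w :: p :: l'
      · -- u is on the chain: go through its successor pu
        obtain ⟨L₁, pu, L₂, heq, hchpu, hmpu⟩ := chain_succ hch u hu_mem huadj
        rw [hufα] at hmpu
        have hψpu : shiftC y f (w :: p :: l') s(y, pu) = α :=
          (shift_pair hch L₁ u pu L₂ heq).trans hufα
        have hpu_ne_z : pu ≠ w := by
          cases L₁ with
          | nil =>
            simp only [List.nil_append, List.cons.injEq] at heq
            exact absurd heq.1.symm hu_ne_z
          | cons a L₁' =>
            simp only [List.cons_append, List.cons.injEq] at heq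
            have hpu_mem : pu ∈ p :: l' := by
              rw [heq.2]
              cases L₁' with
              | nil => simp
              | cons b L => simp
            exact fun h' => hnot (h' ▸ hpu_mem)
        have hGypu : G.Adj y pu := chain_adjG hxy hchpu
        have hHwypu : (G.deleteEdges {s(y, w)}).Adj y pu := by
          rw [SimpleGraph.deleteEdges_adj]
          exact ⟨hGypu, fun hm =>
            hpu_ne_z (Sym2.congr_right.1 (Set.mem_singleton_iff.1 hm))⟩
        have hA'y : ∀ q, (Kg (G.deleteEdges {s(y, w)}) (shiftC y f (w :: p :: l')) α δ).Adj y q → q = pu := by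
          intro q hq
          rcases hq.2 with hcol | hcol
          · exact proper_unique hproper' hq.1 hHwypu (hcol.trans hψpu.symm)
          · exact absurd hcol ((mem_missing.1 hm2).2 q hq.1)
        have hstrip1 := strip_y hA'y hoffA' hreach'' hzy
        have hlen2 : (pu :: L₂).length ≤ n := by
          have hll := congrArg List.length heq
          simp only [List.length_cons, List.length_append] at hll
          simp only [List.length_cons] at hlen ⊢
          omega
        have hreachpu := ih hchpu hlen2 hmpu
        have hpu_ne_y : pu ≠ y := chain_ne_y hxy hchpu pu (List.mem_cons_self)
        have hoffA : ∀ a b, (Kg (G.deleteEdges {s(x, y)}) f α δ).Adj a b → a ≠ y → b ≠ y →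
            (offY (Kg (G.deleteEdges {s(x, y)}) f α δ) y).Adj a b :=
          fun a b hab ha hb => ⟨hab, ha, hb⟩
        have hstrip2 := strip_y hAy hoffA hreachpu hpu_ne_y
        exact (SimpleGraph.Reachable.mono offY_le (hstrip1.trans hstrip2)).trans
          hAyu.symm.reachable
      · -- u is not on the chain
        have hψu : shiftC y f (w :: p :: l') s(y, u) = f s(y, u) :=
          shift_nonchain hch u hu_mem
        have hHwyu : (G.deleteEdges {s(y, w)}).Adj y u := by
          rw [SimpleGraph.deleteEdges_adj]
          exact ⟨del_adj_G huadj, fun hm =>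
            hu_ne_z (Sym2.congr_right.1 (Set.mem_singleton_iff.1 hm))⟩
        have hψuα : shiftC y f (w :: p :: l') s(y, u) = α := by rw [hψu, hufα]
        have hA'y : ∀ q, (Kg (G.deleteEdges {s(y, w)}) (shiftC y f (w :: p :: l')) α δ).Adj y q → q = u := by
          intro q hq
          rcases hq.2 with hcol | hcol
          · exact proper_unique hproper' hq.1 hHwyu (hcol.trans hψuα.symm)
          · exact absurd hcol ((mem_missing.1 hm2).2 q hq.1)
        have hstrip := strip_y hA'y hoffA' hreach'' hzy
        exact (SimpleGraph.Reachable.mono offY_le hstrip).trans hAyu.symm.reachable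

end Claims

section Counting

variable {G : SimpleGraph V} [Fintype V] {Δ : ℕ} {x y : V} {f : Sym2 V → ℕ}

lemma missing_card_ge {W : SimpleGraph V} (v : V) :
    Δ ≤ (missing W Δ f v).card + (W.neighborFinset v).card := by
  classical
  have h1 : ((Finset.Icc 1 Δ).filter (fun c => ∀ u, W.Adj v u → f s(v, u) ≠ c)).card +
      ((Finset.Icc 1 Δ).filter (fun c => ¬ ∀ u, W.Adj v u → f s(v, u) ≠ c)).card
      = (Finset.Icc 1 Δ).card :=
    Finset.card_filter_add_card_filter_not _
  have hIcc : (Finset.Icc 1 Δ).card = Δ := by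
    rw [Nat.card_Icc]; omega
  have hsub : (Finset.Icc 1 Δ).filter (fun c => ¬ ∀ u, W.Adj v u → f s(v, u) ≠ c) ⊆
      (W.neighborFinset v).image (fun u => f s(v, u)) := by
    intro c hcm
    rw [Finset.mem_filter] at hcm
    have := hcm.2
    push_neg at this
    obtain ⟨u, hu, hfu⟩ := this
    exact Finset.mem_image.2 ⟨u, (W.mem_neighborFinset v u).2 hu, hfu⟩
  have h2 : ((Finset.Icc 1 Δ).filter (fun c => ¬ ∀ u, W.Adj v u → f s(v, u) ≠ c)).card ≤
      (W.neighborFinset v).card :=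
    le_trans (Finset.card_le_card hsub) Finset.card_image_le
  have hmeq : (missing W Δ f v).card =
      ((Finset.Icc 1 Δ).filter (fun c => ∀ u, W.Adj v u → f s(v, u) ≠ c)).card := by
    unfold missing
    congr 1
    exact Finset.filter_congr_decidable _ _ _
  omega

lemma nbr_del_x (hxy : G.Adj x y) :
    (G.deleteEdges {s(x, y)}).neighborFinset x = (G.neighborFinset x).erase y := by
  ext q
  simp only [SimpleGraph.mem_neighborFinset, SimpleGraph.deleteEdges_adj,
    Finset.mem_erase, Set.mem_singleton_iff]
  constructor
  · rintro ⟨hadj, hne⟩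
    exact ⟨fun h => hne (by rw [h]), hadj⟩
  · rintro ⟨hne, hadj⟩
    exact ⟨hadj, fun h => hne (Sym2.congr_right.1 h)⟩

lemma nbr_del_y (hxy : G.Adj x y) :
    (G.deleteEdges {s(x, y)}).neighborFinset y = (G.neighborFinset y).erase x := by
  ext q
  simp only [SimpleGraph.mem_neighborFinset, SimpleGraph.deleteEdges_adj,
    Finset.mem_erase, Set.mem_singleton_iff]
  constructor
  · rintro ⟨hadj, hne⟩
    refine ⟨fun h => hne ?_, hadj⟩
    rw [h, Sym2.eq_swap]
  · rintro ⟨hne, hadj⟩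
    refine ⟨hadj, fun h => ?_⟩
    rcases Sym2.eq_iff.1 h with ⟨h1, h2⟩ | ⟨h1, h2⟩
    · exact hxy.ne (h1.symm)
    · exact hne h2

lemma nbr_del_other {v : V} (hvx : v ≠ x) (hvy : v ≠ y) :
    (G.deleteEdges {s(x, y)}).neighborFinset v = G.neighborFinset v := by
  ext q
  simp only [SimpleGraph.mem_neighborFinset, SimpleGraph.deleteEdges_adj,
    Set.mem_singleton_iff]
  constructor
  · rintro ⟨hadj, -⟩; exact hadj
  · intro hadj
    refine ⟨hadj, fun h => ?_⟩
    rcases Sym2.eq_iff.1 h with ⟨h1, h2⟩ | ⟨h1, h2⟩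
    · exact hvx h1
    · exact hvy h1

lemma exists_missing_y (hxy : G.Adj x y) (hΔ : G.maxDegree = Δ) :
    ∃ δ, δ ∈ missing (G.deleteEdges {s(x, y)}) Δ f y := by
  have h1 : Δ ≤ (missing (G.deleteEdges {s(x, y)}) Δ f y).card +
      ((G.deleteEdges {s(x, y)}).neighborFinset y).card := by
    convert missing_card_ge (Δ := Δ) (f := f) (W := G.deleteEdges {s(x, y)}) y
  have h2 : ((G.deleteEdges {s(x, y)}).neighborFinset y).card =
      (G.neighborFinset y).card - 1 := by
    rw [nbr_del_y hxy, Finset.card_erase_of_mem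
      ((G.mem_neighborFinset y x).2 hxy.symm)]
  have h3 : 0 < (G.neighborFinset y).card :=
    Finset.card_pos.2 ⟨x, (G.mem_neighborFinset y x).2 hxy.symm⟩
  have h4 : (G.neighborFinset y).card ≤ Δ := by
    rw [← hΔ]
    exact G.degree_le_maxDegree y
  have h5 : 0 < (missing (G.deleteEdges {s(x, y)}) Δ f y).card := by omega
  obtain ⟨δ, hδ⟩ := Finset.card_pos.1 h5
  exact ⟨δ, hδ⟩

lemma chains_disjoint (hc : EdgeCritical G Δ) (hxy : G.Adj x y)
    (hf : IsProperEdgeColoring (G.deleteEdges {s(x, y)}) Δ f)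
    {w : V} {l : List V} {w' : V} {l' : List V}
    (h : IsChain G Δ x y f w l) (h' : IsChain G Δ x y f w' l') (hne : w ≠ w')
    {α : ℕ} (hα : α ∈ missing (G.deleteEdges {s(x, y)}) Δ f w)
    (hα' : α ∈ missing (G.deleteEdges {s(x, y)}) Δ f w') : False := by
  obtain ⟨δ, hδ⟩ := exists_missing_y (f := f) hxy hc.1
  have r1 := chain_reach hc hxy hf hδ (w :: l).length h (le_refl _) hα
  have r2 := chain_reach hc hxy hf hδ (w' :: l').length h' (le_refl _) hα'
  have hdeg : ∀ t q r s', (Kg (G.deleteEdges {s(x, y)}) f α δ).Adj t q →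
      (Kg (G.deleteEdges {s(x, y)}) f α δ).Adj t r →
      (Kg (G.deleteEdges {s(x, y)}) f α δ).Adj t s' →
      q = r ∨ q = s' ∨ r = s' := by
    intro t q r s' hq hr hs
    rcases hq.2 with h1 | h1 <;> rcases hr.2 with h2 | h2 <;> rcases hs.2 with h3 | h3
    · exact Or.inl (proper_unique hf hq.1 hr.1 (h1.trans h2.symm))
    · exact Or.inl (proper_unique hf hq.1 hr.1 (h1.trans h2.symm))
    · exact Or.inr (Or.inl (proper_unique hf hq.1 hs.1 (h1.trans h3.symm)))
    · exact Or.inr (Or.inr (proper_unique hf hr.1 hs.1 (h2.trans h3.symm)))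
    · exact Or.inr (Or.inr (proper_unique hf hr.1 hs.1 (h2.trans h3.symm)))
    · exact Or.inr (Or.inl (proper_unique hf hq.1 hs.1 (h1.trans h3.symm)))
    · exact Or.inl (proper_unique hf hq.1 hr.1 (h1.trans h2.symm))
    · exact Or.inl (proper_unique hf hq.1 hr.1 (h1.trans h2.symm))
  have huy : ∀ q r, (Kg (G.deleteEdges {s(x, y)}) f α δ).Adj y q →
      (Kg (G.deleteEdges {s(x, y)}) f α δ).Adj y r → q = r := by
    intro q r hq hr
    have hq' : f s(y, q) = α := by
      rcases hq.2 with h1 | h1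
      · exact h1
      · exact absurd h1 ((mem_missing.1 hδ).2 q hq.1)
    have hr' : f s(y, r) = α := by
      rcases hr.2 with h1 | h1
      · exact h1
      · exact absurd h1 ((mem_missing.1 hδ).2 r hr.1)
    exact proper_unique hf hq.1 hr.1 (hq'.trans hr'.symm)
  have hvw : ∀ (v0 : V), α ∈ missing (G.deleteEdges {s(x, y)}) Δ f v0 →
      ∀ q r, (Kg (G.deleteEdges {s(x, y)}) f α δ).Adj v0 q →
      (Kg (G.deleteEdges {s(x, y)}) f α δ).Adj v0 r → q = r := by
    intro v0 hv0 q r hq hr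
    have hq' : f s(v0, q) = δ := by
      rcases hq.2 with h1 | h1
      · exact absurd h1 ((mem_missing.1 hv0).2 q hq.1)
      · exact h1
    have hr' : f s(v0, r) = δ := by
      rcases hr.2 with h1 | h1
      · exact absurd h1 ((mem_missing.1 hv0).2 r hr.1)
      · exact h1
    exact proper_unique hf hq.1 hr.1 (hq'.trans hr'.symm)
  exact three hdeg huy (hvw w hα) (hvw w' hα')
    (Ne.symm (chain_ne_y hxy h w (List.mem_cons_self)))
    (Ne.symm (chain_ne_y hxy h' w' (List.mem_cons_self)))
    hne r1.symm r2.symm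

lemma chain_closure (hc : EdgeCritical G Δ) (hxy : G.Adj x y)
    (hf : IsProperEdgeColoring (G.deleteEdges {s(x, y)}) Δ f)
    {w : V} {l : List V} (h : IsChain G Δ x y f w l) {β : ℕ}
    (hβ : β ∈ missing (G.deleteEdges {s(x, y)}) Δ f w) :
    ∃ u lu, IsChain G Δ x y f u lu ∧ (G.deleteEdges {s(x, y)}).Adj y u ∧
      f s(y, u) = β := by
  have hβy : ∃ u, (G.deleteEdges {s(x, y)}).Adj y u ∧ f s(y, u) = β := by
    by_contra hcon
    push_neg at hcon
    have hmem : β ∈ missing (G.deleteEdges {s(x, y)}) Δ f y :=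
      mem_missing.2 ⟨(mem_missing.1 hβ).1, fun u hu => hcon u hu⟩
    exact chain_missing_y hc hxy hf h hβ hmem
  obtain ⟨u, huadj, hufβ⟩ := hβy
  have hu_ne_w : u ≠ w := by
    rintro rfl
    exact (mem_missing.1 hβ).2 y huadj.symm (by rw [Sym2.eq_swap]; exact hufβ)
  by_cases hu : u ∈ w :: l
  · exfalso
    obtain ⟨L₁, pu, L₂, heq, hchpu, hmpu⟩ := chain_succ h u hu huadj
    rw [hufβ] at hmpu
    have hpu_ne_w : pu ≠ w := by
      cases L₁ with
      | nil =>
        simp only [List.nil_append, List.cons.injEq] at heq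
        exact absurd heq.1.symm hu_ne_w
      | cons a L₁' =>
        simp only [List.cons_append, List.cons.injEq] at heq
        have hpu_mem : pu ∈ l := by
          rw [heq.2]
          cases L₁' with
          | nil => simp
          | cons b L => simp
        have hnd := chain_nodup h
        rw [List.nodup_cons] at hnd
        exact fun h' => hnd.1 (h' ▸ hpu_mem)
    exact chains_disjoint hc hxy hf h hchpu (Ne.symm hpu_ne_w) hβ hmpu
  · refine ⟨u, w :: l, IsChain.cons h hu huadj ?_, huadj, hufβ⟩
    rw [hufβ]
    exact hβ

end Counting

end VAL

theorem stmt1 (G : SimpleGraph V) [Fintype V] (Δ : ℕ) (hc : EdgeCritical G Δ)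
    (x y : V) (hxy : G.Adj x y) :
    Δ - G.degree x + 1 ≤
      (Finset.univ.filter (fun z => G.Adj y z ∧ z ≠ x ∧ G.degree z = Δ)).card := by
  classical
  have hHlt : G.deleteEdges {s(x, y)} < G := by
    refine lt_of_le_of_ne (SimpleGraph.deleteEdges_le _) ?_
    intro heq
    have h1 : (G.deleteEdges {s(x, y)}).Adj x y := by rw [heq]; exact hxy
    exact ((SimpleGraph.deleteEdges_adj).1 h1).2 rfl
  obtain ⟨f, hf⟩ := hc.2.2.2 _ hHlt
  set W := Finset.univ.filter (fun w => ∃ l, VAL.IsChain G Δ x y f w l) with hW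
  set S := W.erase x with hS
  have hxW : x ∈ W := Finset.mem_filter.2 ⟨Finset.mem_univ _, ⟨[], VAL.IsChain.base⟩⟩
  have hdisj : ∀ w ∈ W, ∀ w' ∈ W, w ≠ w' →
      Disjoint (missing (G.deleteEdges {s(x, y)}) Δ f w)
        (missing (G.deleteEdges {s(x, y)}) Δ f w') := by
    intro w hw w' hw' hne
    rw [Finset.disjoint_left]
    intro α hα hα'
    obtain ⟨l, hchl⟩ := (Finset.mem_filter.1 hw).2
    obtain ⟨l', hchl'⟩ := (Finset.mem_filter.1 hw').2
    exact VAL.chains_disjoint hc hxy hf hchl hchl' hne hα hα'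
  have hsum : ∑ w ∈ W, (missing (G.deleteEdges {s(x, y)}) Δ f w).card =
      (W.biUnion (fun w => missing (G.deleteEdges {s(x, y)}) Δ f w)).card :=
    (Finset.card_biUnion hdisj).symm
  have hsub : W.biUnion (fun w => missing (G.deleteEdges {s(x, y)}) Δ f w) ⊆
      S.image (fun w => f s(y, w)) := by
    intro c hcm
    obtain ⟨w, hw, hcw⟩ := Finset.mem_biUnion.1 hcm
    obtain ⟨l, hchl⟩ := (Finset.mem_filter.1 hw).2
    obtain ⟨u, lu, hchu, huadj, hufc⟩ := VAL.chain_closure hc hxy hf hchl hcw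
    refine Finset.mem_image.2 ⟨u, ?_, hufc⟩
    refine Finset.mem_erase.2 ⟨?_, Finset.mem_filter.2 ⟨Finset.mem_univ _, ⟨lu, hchu⟩⟩⟩
    rintro rfl
    exact VAL.not_adj_del_yx huadj
  have hcard1 : (W.biUnion (fun w => missing (G.deleteEdges {s(x, y)}) Δ f w)).card ≤
      S.card := le_trans (Finset.card_le_card hsub) Finset.card_image_le
  have hsplit : (missing (G.deleteEdges {s(x, y)}) Δ f x).card +
      ∑ w ∈ S, (missing (G.deleteEdges {s(x, y)}) Δ f w).card =
      ∑ w ∈ W, (missing (G.deleteEdges {s(x, y)}) Δ f w).card := by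
    rw [hS]
    exact Finset.add_sum_erase W (fun w => (missing (G.deleteEdges {s(x, y)}) Δ f w).card) hxW
  -- bound at x
  have hMx : Δ + 1 ≤ (missing (G.deleteEdges {s(x, y)}) Δ f x).card + G.degree x := by
    have h1 : Δ ≤ (missing (G.deleteEdges {s(x, y)}) Δ f x).card +
        ((G.deleteEdges {s(x, y)}).neighborFinset x).card := by
      convert VAL.missing_card_ge (Δ := Δ) (f := f) (W := G.deleteEdges {s(x, y)}) x
    have h2 : ((G.deleteEdges {s(x, y)}).neighborFinset x).card =
        (G.neighborFinset x).card - 1 := by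
      rw [VAL.nbr_del_x hxy, Finset.card_erase_of_mem ((G.mem_neighborFinset x y).2 hxy)]
    have h3 : 0 < (G.neighborFinset x).card :=
      Finset.card_pos.2 ⟨y, (G.mem_neighborFinset x y).2 hxy⟩
    have h4 : G.degree x = (G.neighborFinset x).card := rfl
    omega
  -- bound on S
  have hMw : ∀ w ∈ S, Δ ≤ (missing (G.deleteEdges {s(x, y)}) Δ f w).card + G.degree w := by
    intro w hw
    have hwx : w ≠ x := (Finset.mem_erase.1 hw).1
    obtain ⟨l, hchl⟩ := (Finset.mem_filter.1 (Finset.mem_erase.1 hw).2).2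
    have hwy : w ≠ y := VAL.chain_ne_y hxy hchl w (List.mem_cons_self)
    have h1 : Δ ≤ (missing (G.deleteEdges {s(x, y)}) Δ f w).card +
        ((G.deleteEdges {s(x, y)}).neighborFinset w).card := by
      convert VAL.missing_card_ge (Δ := Δ) (f := f) (W := G.deleteEdges {s(x, y)}) w
    rw [VAL.nbr_del_other hwx hwy] at h1
    have h4 : G.degree w = (G.neighborFinset w).card := rfl
    omega
  have hS2 : ∀ w ∈ S.filter (fun w => ¬ G.degree w = Δ),
      1 ≤ (missing (G.deleteEdges {s(x, y)}) Δ f w).card := by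
    intro w hw
    rw [Finset.mem_filter] at hw
    have hd : G.degree w ≤ Δ := hc.1 ▸ G.degree_le_maxDegree w
    have := hMw w hw.1
    have hne := hw.2
    omega
  have hsum2 : (S.filter (fun w => ¬ G.degree w = Δ)).card ≤
      ∑ w ∈ S, (missing (G.deleteEdges {s(x, y)}) Δ f w).card := by
    calc (S.filter (fun w => ¬ G.degree w = Δ)).card
        = ∑ w ∈ S.filter (fun w => ¬ G.degree w = Δ), 1 := by simp
      _ ≤ ∑ w ∈ S.filter (fun w => ¬ G.degree w = Δ),
            (missing (G.deleteEdges {s(x, y)}) Δ f w).card := Finset.sum_le_sum hS2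
      _ ≤ ∑ w ∈ S, (missing (G.deleteEdges {s(x, y)}) Δ f w).card :=
          Finset.sum_le_sum_of_subset (Finset.filter_subset _ _)
  have hcardsplit : (S.filter (fun w => G.degree w = Δ)).card +
      (S.filter (fun w => ¬ G.degree w = Δ)).card = S.card :=
    Finset.card_filter_add_card_filter_not _
  have htarget : S.filter (fun w => G.degree w = Δ) ⊆
      Finset.univ.filter (fun z => G.Adj y z ∧ z ≠ x ∧ G.degree z = Δ) := by
    intro w hw
    rw [Finset.mem_filter] at hw
    obtain ⟨hwS, hdeg⟩ := hw
    have hwne : w ≠ x := (Finset.mem_erase.1 hwS).1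
    obtain ⟨l, hchl⟩ := (Finset.mem_filter.1 (Finset.mem_erase.1 hwS).2).2
    exact Finset.mem_filter.2 ⟨Finset.mem_univ _,
      VAL.chain_adjG hxy hchl, hwne, hdeg⟩
  have hfinal := Finset.card_le_card htarget
  have hdx : G.degree x ≤ Δ := hc.1 ▸ G.degree_le_maxDegree x
  omega
end

section
/- If G is a simple edge-Δ-critical graph and xy ∈ E(G), then d(x) + d(y) ≥ Δ + 2. -/
open Finset
open scoped Classical

variable {V : Type*}

lemma missing_card_le (H : SimpleGraph V) [Fintype V] (k : ℕ) (φ : Sym2 V → ℕ) (v : V) :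
    k - H.degree v ≤ (missing H k φ v).card := by
  classical
  have hsub : (Finset.Icc 1 k) \ (H.neighborFinset v).image (fun u => φ s(v,u))
      ⊆ missing H k φ v := by
    intro c hc
    rw [Finset.mem_sdiff] at hc
    simp only [missing, Finset.mem_filter]
    exact ⟨hc.1, fun u hu hn => hc.2 (Finset.mem_image.2 ⟨u, by simpa using hu, hn⟩)⟩
  have h1 := Finset.card_le_card hsub
  have h2 := Finset.le_card_sdiff ((H.neighborFinset v).image (fun u => φ s(v,u)))
    (Finset.Icc 1 k)
  have h3 := Finset.card_image_le (s := H.neighborFinset v) (f := fun u => φ s(v,u))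
  have h4 : (Finset.Icc 1 k).card = k := by simp
  have h5 : (H.neighborFinset v).card = H.degree v := rfl
  omega

theorem stmt2 (G : SimpleGraph V) [Fintype V] (Δ : ℕ) (hc : EdgeCritical G Δ)
    (x y : V) (hxy : G.Adj x y) :
    Δ + 2 ≤ G.degree x + G.degree y := by
  classical
  obtain ⟨hΔ, hnone, -, hsubgraph⟩ := hc
  set H := G.deleteEdges {s(x,y)} with hH
  have hHxy : ¬ H.Adj x y := by
    simp [hH, SimpleGraph.deleteEdges_adj]
  have hHle : H ≤ G := SimpleGraph.deleteEdges_le _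
  have hHlt : H < G := lt_of_le_of_ne hHle (by
    intro h
    exact hHxy (h ▸ hxy))
  obtain ⟨φ, hφ1, hφ2⟩ := hsubgraph H hHlt
  have hedge : ∀ e, e ∈ H.edgeSet ↔ e ∈ G.edgeSet ∧ e ≠ s(x,y) := by
    intro e
    simp [hH, SimpleGraph.edgeSet_deleteEdges]
  -- disjointness of missing sets
  have hdisj : Disjoint (missing H Δ φ x) (missing H Δ φ y) := by
    rw [Finset.disjoint_left]
    intro c hcx hcy
    simp only [missing, Finset.mem_filter] at hcx hcy
    apply hnone
    refine ⟨fun e => if e = s(x,y) then c else φ e, ?_, ?_⟩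
    · intro e he
      by_cases h : e = s(x,y)
      · simpa [h] using hcx.1
      · simpa [h] using hφ1 e ((hedge e).2 ⟨he, h⟩)
    · intro e he f hf hef ⟨v, hve, hvf⟩
      have key : ∀ g, g ∈ G.edgeSet → g ≠ s(x,y) → v ∈ g → v ∈ (s(x,y) : Sym2 V) →
          φ g ≠ c := by
        intro g hg hgne hvg hvxy
        have hgH : g ∈ H.edgeSet := (hedge g).2 ⟨hg, hgne⟩
        set u := Sym2.Mem.other hvg with hu
        have hgu : s(v, u) = g := Sym2.other_spec hvg
        have hadj : H.Adj v u := by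
          rw [← SimpleGraph.mem_edgeSet, hgu]; exact hgH
        have : φ s(v, u) ≠ c := by
          rcases Sym2.mem_iff.1 hvxy with h | h
          · subst h; exact hcx.2 u hadj
          · subst h; exact hcy.2 u hadj
        rwa [hgu] at this
      by_cases h1 : e = s(x,y) <;> by_cases h2 : f = s(x,y)
      · exact absurd (h1.trans h2.symm) hef
      · simp only [h1, if_pos rfl, if_neg h2]
        exact fun h => key f hf h2 hvf (h1 ▸ hve) h.symm
      · simp only [h2, if_pos rfl, if_neg h1]
        exact key e he h1 hve (h2 ▸ hvf)
      · simp only [if_neg h1, if_neg h2]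
        exact hφ2 e ((hedge e).2 ⟨he, h1⟩) f ((hedge f).2 ⟨hf, h2⟩) hef ⟨v, hve, hvf⟩
  -- cardinality bounds
  have hcard : (missing H Δ φ x).card + (missing H Δ φ y).card ≤ Δ := by
    rw [← Finset.card_union_of_disjoint hdisj]
    have hsub : missing H Δ φ x ∪ missing H Δ φ y ⊆ Finset.Icc 1 Δ := by
      apply Finset.union_subset <;>
        · intro c hcm
          simp only [missing, Finset.mem_filter] at hcm
          exact hcm.1
    simpa using Finset.card_le_card hsub
  have hdegkey : ∀ a b : V, G.Adj a b → s(a,b) = s(x,y) → H.degree a + 1 ≤ G.degree a := by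
    intro a b hab he
    have hsub2 : H.neighborFinset a ⊆ G.neighborFinset a \ {b} := by
      intro u hu
      simp only [SimpleGraph.mem_neighborFinset, hH, SimpleGraph.deleteEdges_adj,
        Set.mem_singleton_iff] at hu
      simp only [Finset.mem_sdiff, SimpleGraph.mem_neighborFinset, Finset.mem_singleton]
      exact ⟨hu.1, fun h => hu.2 (by rw [h, he])⟩
    have hb : b ∈ G.neighborFinset a := by simpa using hab
    have h1 := Finset.card_le_card hsub2
    rw [Finset.card_sdiff_of_subset (by simpa using hb)] at h1
    have h2 : 1 ≤ (G.neighborFinset a).card := Finset.card_pos.2 ⟨b, hb⟩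
    simp only [Finset.card_singleton] at h1
    have h5 : (H.neighborFinset a).card = H.degree a := rfl
    have h6 : (G.neighborFinset a).card = G.degree a := rfl
    omega
  have hdx := hdegkey x y hxy rfl
  have hdy := hdegkey y x hxy.symm (Sym2.eq_swap)
  have hmx : Δ - H.degree x ≤ (missing H Δ φ x).card := by convert missing_card_le H Δ φ x
  have hmy : Δ - H.degree y ≤ (missing H Δ φ y).card := by convert missing_card_le H Δ φ y
  have hgx : G.degree x ≤ Δ := hΔ ▸ G.degree_le_maxDegree x
  have hgy : G.degree y ≤ Δ := hΔ ▸ G.degree_le_maxDegree y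
  omega
end

section
/- Let G be a simple graph, e = xy an edge, and φ an edge-Δ-coloring of G - e. If X ⊆ V(G) is an elementary set with respect to φ containing x and both endpoints of e, and q is a positive number with 2(Δ - q) + (Δ - d(x)) + 1 > Δ, then X contains at most one vertex other than x of degree less than q. -/
open Finset
open scoped Classical

variable {V : Type*}

lemma missing_card_add (H : SimpleGraph V) [Fintype V] (k : ℕ) (φ : Sym2 V → ℕ) (v : V) :
    k ≤ (missing H k φ v).card + H.degree v := by
  classical
  have hsub : Finset.Icc 1 k ⊆
      missing H k φ v ∪ (H.neighborFinset v).image (fun u => φ s(v, u)) := by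
    intro c hc
    by_cases h : ∀ u, H.Adj v u → φ s(v, u) ≠ c
    · refine Finset.mem_union_left _ ?_
      simp only [missing, Finset.mem_filter]
      exact ⟨hc, h⟩
    · push_neg at h
      obtain ⟨u, hu, he⟩ := h
      exact Finset.mem_union_right _
        (Finset.mem_image.mpr ⟨u, by simpa using hu, he⟩)
  calc k = (Finset.Icc 1 k).card := by simp
    _ ≤ _ := Finset.card_le_card hsub
    _ ≤ (missing H k φ v).card + ((H.neighborFinset v).image (fun u => φ s(v, u))).card :=
        Finset.card_union_le _ _
    _ ≤ (missing H k φ v).card + H.degree v := by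
        have := Finset.card_image_le (s := H.neighborFinset v) (f := fun u => φ s(v, u))
        simp only [SimpleGraph.card_neighborFinset_eq_degree] at this
        omega

lemma deg_del_le (G : SimpleGraph V) [Fintype V] (s : Set (Sym2 V)) (v : V) :
    (G.deleteEdges s).degree v ≤ G.degree v := by
  classical
  apply Finset.card_le_card
  intro u hu
  simp only [SimpleGraph.mem_neighborFinset] at *
  exact (SimpleGraph.deleteEdges_adj.mp hu).1

lemma deg_del_x (G : SimpleGraph V) [Fintype V] (x y : V) (hxy : G.Adj x y) :
    (G.deleteEdges {s(x, y)}).degree x + 1 = G.degree x := by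
  classical
  have hne : x ≠ y := G.ne_of_adj hxy
  have h1 : (G.deleteEdges {s(x, y)}).neighborFinset x = (G.neighborFinset x).erase y := by
    ext u
    simp only [SimpleGraph.mem_neighborFinset, SimpleGraph.deleteEdges_adj, Finset.mem_erase,
      Set.mem_singleton_iff]
    constructor
    · rintro ⟨ha, hs⟩
      exact ⟨fun h => hs (by rw [h]), ha⟩
    · rintro ⟨hu, ha⟩
      refine ⟨ha, fun h => ?_⟩
      rcases Sym2.eq_iff.mp h with ⟨-, rfl⟩ | ⟨h1, -⟩
      · exact hu rfl
      · exact hne h1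
  have hy : y ∈ G.neighborFinset x := by simpa using hxy
  rw [SimpleGraph.degree, h1, Finset.card_erase_of_mem hy]
  have : 1 ≤ (G.neighborFinset x).card := Finset.card_pos.mpr ⟨y, hy⟩
  rw [SimpleGraph.degree]
  omega

theorem stmt4 (G : SimpleGraph V) [Fintype V] (Δ : ℕ) (hΔ : G.maxDegree = Δ)
    (x y : V) (hxy : G.Adj x y) (φ : Sym2 V → ℕ)
    (hφ : IsProperEdgeColoring (G.deleteEdges {s(x, y)}) Δ φ)
    (X : Finset V) (hxX : x ∈ X) (hyX : y ∈ X)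
    (hX : ∀ u ∈ X, ∀ v ∈ X, u ≠ v →
      missing (G.deleteEdges {s(x, y)}) Δ φ u ∩ missing (G.deleteEdges {s(x, y)}) Δ φ v = ∅)
    (q : ℝ) (hq0 : 0 < q)
    (hq : 2 * ((Δ : ℝ) - q) + ((Δ : ℝ) - (G.degree x : ℝ)) + 1 > (Δ : ℝ)) :
    (X.filter (fun v => v ≠ x ∧ (G.degree v : ℝ) < q)).card ≤ 1 := by
  classical
  by_contra hcon
  push_neg at hcon
  obtain ⟨a, ha, b, hb, hab⟩ := Finset.one_lt_card.mp hcon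
  rw [Finset.mem_filter] at ha hb
  obtain ⟨haX, hax, haq⟩ := ha
  obtain ⟨hbX, hbx, hbq⟩ := hb
  set H := G.deleteEdges {s(x, y)} with hH
  set Ma := missing H Δ φ a with hMa
  set Mb := missing H Δ φ b with hMb
  set Mx := missing H Δ φ x with hMx
  -- pairwise disjoint
  have dab : Disjoint Ma Mb := Finset.disjoint_iff_inter_eq_empty.mpr (hX a haX b hbX hab)
  have dax : Disjoint Ma Mx := Finset.disjoint_iff_inter_eq_empty.mpr (hX a haX x hxX hax)
  have dbx : Disjoint Mb Mx := Finset.disjoint_iff_inter_eq_empty.mpr (hX b hbX x hxX hbx)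
  -- sum of cards ≤ Δ
  have hsub : Ma ∪ Mb ∪ Mx ⊆ Finset.Icc 1 Δ := by
    intro c hc
    simp only [hMa, hMb, hMx, missing, Finset.mem_union, Finset.mem_filter] at hc
    tauto
  have hcard : Ma.card + Mb.card + Mx.card ≤ Δ := by
    have h1 : (Ma ∪ Mb ∪ Mx).card = Ma.card + Mb.card + Mx.card := by
      rw [Finset.card_union_of_disjoint, Finset.card_union_of_disjoint dab]
      exact Finset.disjoint_union_left.mpr ⟨dax, dbx⟩
    have h2 : (Ma ∪ Mb ∪ Mx).card ≤ (Finset.Icc 1 Δ).card := Finset.card_le_card hsub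
    rw [h1] at h2
    simpa using h2
  -- lower bounds
  have hba : Δ ≤ Ma.card + H.degree a := by convert missing_card_add H Δ φ a
  have hbb : Δ ≤ Mb.card + H.degree b := by convert missing_card_add H Δ φ b
  have hbx' : Δ ≤ Mx.card + H.degree x := by convert missing_card_add H Δ φ x
  have hda : H.degree a ≤ G.degree a := by convert deg_del_le G _ a
  have hdb : H.degree b ≤ G.degree b := by convert deg_del_le G _ b
  have hdx : H.degree x + 1 = G.degree x := by convert deg_del_x G x y hxy
  have h1 : (Δ : ℝ) ≤ (Ma.card : ℝ) + (G.degree a : ℝ) := by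
    exact_mod_cast le_trans hba (by omega)
  have h2 : (Δ : ℝ) ≤ (Mb.card : ℝ) + (G.degree b : ℝ) := by
    exact_mod_cast le_trans hbb (by omega)
  have h3 : (Δ : ℝ) + 1 ≤ (Mx.card : ℝ) + (G.degree x : ℝ) := by
    exact_mod_cast le_trans (by omega : Δ + 1 ≤ Mx.card + (H.degree x + 1)) (by omega)
  have h4 : (Ma.card : ℝ) + (Mb.card : ℝ) + (Mx.card : ℝ) ≤ (Δ : ℝ) := by
    exact_mod_cast hcard
  linarith
end

section
/- Kierstead path lemma, parts (1) and (2): Let G be a simple graph with maximum degree Δ and χ'(G) = Δ + 1, let e₁ = y₀y₁ be a critical edge, φ ∈ C^Δ(G - e₁), and let K = (y₀, e₁, y₁, e₂, y₂, e₃, y₃) be a Kierstead path with respect to e₁ and φ. Then φ̄(y₀) ∩ φ̄(y₁) = ∅, and if d(y₂) < Δ then V(K) is elementary with respect to φ. -/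
open Finset
open scoped Classical

variable {V : Type*}

/-- Missing colors in `G - y₀y₁`. -/
noncomputable def m5 (G : SimpleGraph V) (Δ : ℕ) (φ : Sym2 V → ℕ) (y0 y1 v : V) : Finset ℕ :=
  missing (G.deleteEdges {s(y0, y1)}) Δ φ v

namespace KP

lemma mem_missing {H : SimpleGraph V} {k : ℕ} {ψ : Sym2 V → ℕ} {v : V} {c : ℕ} :
    c ∈ missing H k ψ v ↔ c ∈ Finset.Icc 1 k ∧ ∀ u, H.Adj v u → ψ s(v, u) ≠ c := by
  simp [missing]

def PC (H : SimpleGraph V) (k : ℕ) (ψ : Sym2 V → ℕ) : Prop :=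
  (∀ ⦃u v : V⦄, H.Adj u v → ψ s(u, v) ∈ Finset.Icc 1 k) ∧
    ∀ ⦃v u1 u2 : V⦄, H.Adj v u1 → H.Adj v u2 → u1 ≠ u2 → ψ s(v, u1) ≠ ψ s(v, u2)

lemma pc_iff {H : SimpleGraph V} {k : ℕ} {ψ : Sym2 V → ℕ} :
    IsProperEdgeColoring H k ψ ↔ PC H k ψ := by
  constructor
  · rintro ⟨hI, hP⟩
    refine ⟨fun u v h => hI _ ((SimpleGraph.mem_edgeSet _).2 h), fun v u1 u2 h1 h2 hne => ?_⟩
    refine hP _ ((SimpleGraph.mem_edgeSet _).2 h1) _ ((SimpleGraph.mem_edgeSet _).2 h2) ?_ ⟨v, ?_, ?_⟩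
    · intro he; rw [Sym2.eq_iff] at he
      rcases he with ⟨_, h⟩ | ⟨hv, hu⟩
      · exact hne h
      · exact hne (hu.trans hv)
    · simp
    · simp
  · rintro ⟨hI, hP⟩
    constructor
    · intro e he
      induction e with
      | _ u v => exact hI ((SimpleGraph.mem_edgeSet _).1 he)
    · rintro e he f hf hne ⟨v, hve, hvf⟩
      obtain ⟨a, rfl⟩ := Sym2.mem_iff_exists.1 hve
      obtain ⟨b, rfl⟩ := Sym2.mem_iff_exists.1 hvf
      exact hP ((SimpleGraph.mem_edgeSet _).1 he) ((SimpleGraph.mem_edgeSet _).1 hf)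
        (fun h => hne (by rw [h]))

lemma extend_contra (G : SimpleGraph V) (Δ : ℕ) (y0 y1 : V)
    (hG1 : ¬ ∃ ψ, IsProperEdgeColoring G Δ ψ) (h01 : G.Adj y0 y1) {ψ : Sym2 V → ℕ}
    (hψ : IsProperEdgeColoring (G.deleteEdges {s(y0, y1)}) Δ ψ) {c : ℕ}
    (hc0 : c ∈ m5 G Δ ψ y0 y1 y0) (hc1 : c ∈ m5 G Δ ψ y0 y1 y1) : False := by
  obtain ⟨hc0I, hc0m⟩ := mem_missing.1 hc0
  obtain ⟨_, hc1m⟩ := mem_missing.1 hc1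
  obtain ⟨hI, hP⟩ := pc_iff.1 hψ
  have hGd : ∀ u v : V, (G.deleteEdges {s(y0, y1)}).Adj u v ↔
      G.Adj u v ∧ s(u, v) ≠ s(y0, y1) := by
    intro u v; rw [SimpleGraph.deleteEdges_adj]; simp
  refine hG1 ⟨fun e => if e = s(y0, y1) then c else ψ e, pc_iff.2 ⟨?_, ?_⟩⟩
  · intro u v h
    by_cases he : s(u, v) = s(y0, y1)
    · simpa [he] using hc0I
    · simpa [he] using hI ((hGd u v).2 ⟨h, he⟩)
  · intro v u1 u2 h1 h2 hne
    by_cases k1 : s(v, u1) = s(y0, y1) <;> by_cases k2 : s(v, u2) = s(y0, y1)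
    · exact absurd (Sym2.congr_right.1 (k1.trans k2.symm)) hne
    · simp only [k1, if_pos, if_neg k2, if_pos rfl]
      have h2' := (hGd v u2).2 ⟨h2, k2⟩
      rcases Sym2.eq_iff.1 k1 with ⟨rfl, rfl⟩ | ⟨rfl, rfl⟩
      · exact (hc0m u2 h2').symm
      · exact (hc1m u2 h2').symm
    · simp only [k2, if_pos rfl, if_neg k1]
      have h1' := (hGd v u1).2 ⟨h1, k1⟩
      rcases Sym2.eq_iff.1 k2 with ⟨rfl, rfl⟩ | ⟨rfl, rfl⟩
      · exact hc0m u1 h1'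
      · exact hc1m u1 h1'
    · simp only [if_neg k1, if_neg k2]
      exact hP ((hGd v u1).2 ⟨h1, k1⟩) ((hGd v u2).2 ⟨h2, k2⟩) hne

lemma missing_nonempty {H : SimpleGraph V} {k : ℕ} {ψ : Sym2 V → ℕ}
    (hψ : IsProperEdgeColoring H k ψ) {v : V} (S : Finset V)
    (hS : ∀ u, H.Adj v u → u ∈ S) (hcard : S.card < k) :
    ∃ c, c ∈ missing H k ψ v := by
  by_contra h
  push_neg at h
  have hex : ∀ c ∈ Finset.Icc 1 k, ∃ u, H.Adj v u ∧ ψ s(v, u) = c := by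
    intro c hc
    have := h c
    rw [mem_missing] at this
    push_neg at this
    exact this hc
  set g : ℕ → V := fun c => if hc : ∃ u, H.Adj v u ∧ ψ s(v, u) = c then hc.choose else v with hg
  have hmap : ∀ c ∈ Finset.Icc 1 k, g c ∈ S := by
    intro c hc
    have he := hex c hc
    simp only [hg, dif_pos he]
    exact hS _ he.choose_spec.1
  have hval : ∀ c ∈ Finset.Icc 1 k, ψ s(v, g c) = c := by
    intro c hc
    have he := hex c hc
    simp only [hg, dif_pos he]
    exact he.choose_spec.2
  have hinj : Set.InjOn g (Finset.Icc 1 k) := by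
    intro c hc c' hc' hgc
    rw [← hval c hc, ← hval c' hc', hgc]
  have := Finset.card_le_card_of_injOn g hmap hinj
  rw [Nat.card_Icc] at this
  omega


/-- The `(a,b)`-Kempe subgraph. -/
def KG (H : SimpleGraph V) (ψ : Sym2 V → ℕ) (a b : ℕ) : SimpleGraph V where
  Adj u v := H.Adj u v ∧ (ψ s(u, v) = a ∨ ψ s(u, v) = b)
  symm := by
    constructor
    intro u v h
    exact ⟨h.1.symm, by rw [Sym2.eq_swap]; exact h.2⟩
  loopless := ⟨fun v h => H.loopless.irrefl v h.1⟩

/-- Swap colors `a,b` on the Kempe component of `w`. -/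
noncomputable def swp (H : SimpleGraph V) (ψ : Sym2 V → ℕ) (a b : ℕ) (w : V) :
    Sym2 V → ℕ :=
  fun e => if (∃ u v, e = s(u, v) ∧ (KG H ψ a b).Adj u v ∧ (KG H ψ a b).Reachable w u)
    then (if ψ e = a then b else a) else ψ e

lemma cond_iff {H : SimpleGraph V} {ψ : Sym2 V → ℕ} {a b : ℕ} {w u v : V} :
    (∃ u' v', s(u, v) = s(u', v') ∧ (KG H ψ a b).Adj u' v' ∧ (KG H ψ a b).Reachable w u') ↔
      ((KG H ψ a b).Adj u v ∧ (KG H ψ a b).Reachable w u) := by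
  constructor
  · rintro ⟨u', v', heq, hadj, hr⟩
    rcases Sym2.eq_iff.1 heq with ⟨rfl, rfl⟩ | ⟨rfl, rfl⟩
    · exact ⟨hadj, hr⟩
    · exact ⟨hadj.symm, hr.trans hadj.reachable⟩
  · rintro ⟨hadj, hr⟩
    exact ⟨u, v, rfl, hadj, hr⟩

lemma swp_eq {H : SimpleGraph V} {ψ : Sym2 V → ℕ} {a b : ℕ} {w u v : V} :
    swp H ψ a b w s(u, v) =
      if ((KG H ψ a b).Adj u v ∧ (KG H ψ a b).Reachable w u)
        then (if ψ s(u, v) = a then b else a) else ψ s(u, v) := by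
  unfold swp
  exact if_congr cond_iff rfl rfl

lemma swp_val_not_reach {H : SimpleGraph V} {ψ : Sym2 V → ℕ} {a b : ℕ} {w u v : V}
    (h : ¬ (KG H ψ a b).Reachable w u) : swp H ψ a b w s(u, v) = ψ s(u, v) := by
  rw [swp_eq, if_neg (fun c => h c.2)]

lemma swp_val_not_ab {H : SimpleGraph V} {ψ : Sym2 V → ℕ} {a b : ℕ} {w u v : V}
    (h1 : ψ s(u, v) ≠ a) (h2 : ψ s(u, v) ≠ b) : swp H ψ a b w s(u, v) = ψ s(u, v) := by
  rw [swp_eq, if_neg]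
  rintro ⟨⟨_, h | h⟩, _⟩
  exacts [h1 h, h2 h]

lemma swp_proper {H : SimpleGraph V} {k : ℕ} {ψ : Sym2 V → ℕ} {a b : ℕ}
    (hψ : IsProperEdgeColoring H k ψ) (ha : a ∈ Finset.Icc 1 k) (hb : b ∈ Finset.Icc 1 k)
    (w : V) : IsProperEdgeColoring H k (swp H ψ a b w) := by
  obtain ⟨hI, hP⟩ := pc_iff.1 hψ
  refine pc_iff.2 ⟨?_, ?_⟩
  · intro u v h
    rw [swp_eq]
    split
    · split <;> assumption
    · exact hI h
  · intro v u1 u2 h1 h2 hne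
    rw [swp_eq, swp_eq]
    by_cases c1 : (KG H ψ a b).Adj v u1 ∧ (KG H ψ a b).Reachable w v <;>
      by_cases c2 : (KG H ψ a b).Adj v u2 ∧ (KG H ψ a b).Reachable w v
    · rw [if_pos c1, if_pos c2]
      have hd := hP h1 h2 hne
      rcases c1.1.2 with e1 | e1 <;> rcases c2.1.2 with e2 | e2 <;> simp_all <;> omega
    · rw [if_pos c1, if_neg c2]
      have : ψ s(v, u2) ≠ a ∧ ψ s(v, u2) ≠ b := by
        constructor <;> intro hc
        · exact c2 ⟨⟨h2, Or.inl hc⟩, c1.2⟩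
        · exact c2 ⟨⟨h2, Or.inr hc⟩, c1.2⟩
      split
      · exact fun h => this.2 h.symm
      · exact fun h => this.1 h.symm
    · rw [if_neg c1, if_pos c2]
      have : ψ s(v, u1) ≠ a ∧ ψ s(v, u1) ≠ b := by
        constructor <;> intro hc
        · exact c1 ⟨⟨h1, Or.inl hc⟩, c2.2⟩
        · exact c1 ⟨⟨h1, Or.inr hc⟩, c2.2⟩
      split
      · exact this.2
      · exact this.1
    · rw [if_neg c1, if_neg c2]
      exact hP h1 h2 hne

lemma swp_missing_not_reach {H : SimpleGraph V} {k : ℕ} {ψ : Sym2 V → ℕ} {a b : ℕ} {w v : V}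
    (h : ¬ (KG H ψ a b).Reachable w v) (x : ℕ) :
    x ∈ missing H k (swp H ψ a b w) v ↔ x ∈ missing H k ψ v := by
  rw [mem_missing, mem_missing]
  refine and_congr_right fun _ => ⟨fun hm u hu => ?_, fun hm u hu => ?_⟩
  · rw [← swp_val_not_reach (a := a) (b := b) (w := w) h]; exact hm u hu
  · rw [swp_val_not_reach h]; exact hm u hu

lemma swp_missing_not_ab {H : SimpleGraph V} {k : ℕ} {ψ : Sym2 V → ℕ} {a b : ℕ} {w v : V}
    {x : ℕ} (hxa : x ≠ a) (hxb : x ≠ b) :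
    x ∈ missing H k (swp H ψ a b w) v ↔ x ∈ missing H k ψ v := by
  rw [mem_missing, mem_missing]
  refine and_congr_right fun _ => ?_
  have key : ∀ u, H.Adj v u → (swp H ψ a b w s(v, u) = x ↔ ψ s(v, u) = x) := by
    intro u hu
    rw [swp_eq]
    by_cases c : (KG H ψ a b).Adj v u ∧ (KG H ψ a b).Reachable w v
    · rw [if_pos c]
      constructor <;> intro hc <;> exfalso
      · revert hc; split <;> intro hc
        exacts [hxb hc.symm, hxa hc.symm]
      · rcases c.1.2 with e | e
        exacts [hxa (hc.symm.trans e), hxb (hc.symm.trans e)]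
    · rw [if_neg c]
  exact ⟨fun hm u hu hc => hm u hu ((key u hu).2 hc), fun hm u hu hc => hm u hu ((key u hu).1 hc)⟩

lemma swp_flip {H : SimpleGraph V} {k : ℕ} {ψ : Sym2 V → ℕ} {a b : ℕ} {w v : V}
    (hr : (KG H ψ a b).Reachable w v) (haM : a ∈ missing H k ψ v)
    (hb : b ∈ Finset.Icc 1 k) (hab : a ≠ b) :
    b ∈ missing H k (swp H ψ a b w) v := by
  obtain ⟨_, ham⟩ := mem_missing.1 haM
  rw [mem_missing]
  refine ⟨hb, fun u hu => ?_⟩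
  rw [swp_eq]
  by_cases c : (KG H ψ a b).Adj v u ∧ (KG H ψ a b).Reachable w v
  · rw [if_pos c]
    have hne : ψ s(v, u) ≠ a := ham u hu
    rw [if_neg hne]
    exact hab
  · rw [if_neg c]
    intro hc
    exact c ⟨⟨hu, Or.inr hc⟩, hr⟩

lemma K_pendant {H : SimpleGraph V} {k : ℕ} {ψ : Sym2 V → ℕ} {a b : ℕ}
    (hψ : IsProperEdgeColoring H k ψ) {v : V}
    (hv : a ∈ missing H k ψ v ∨ b ∈ missing H k ψ v) :
    ∀ u1 u2, (KG H ψ a b).Adj v u1 → (KG H ψ a b).Adj v u2 → u1 = u2 := by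
  intro u1 u2 h1 h2
  by_contra hne
  have hd := (pc_iff.1 hψ).2 h1.1 h2.1 hne
  rcases hv with hm | hm <;> obtain ⟨_, hmm⟩ := mem_missing.1 hm <;>
    rcases h1.2 with e1 | e1 <;> rcases h2.2 with e2 | e2 <;>
    first
      | exact hd (e1.trans e2.symm)
      | exact hmm u1 h1.1 e1
      | exact hmm u2 h2.1 e2

lemma K_two {H : SimpleGraph V} {k : ℕ} {ψ : Sym2 V → ℕ} {a b : ℕ}
    (hψ : IsProperEdgeColoring H k ψ) :
    ∀ v u1 u2 u3, (KG H ψ a b).Adj v u1 → (KG H ψ a b).Adj v u2 → (KG H ψ a b).Adj v u3 →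
      u1 = u2 ∨ u1 = u3 ∨ u2 = u3 := by
  intro v u1 u2 u3 h1 h2 h3
  by_contra hne
  push_neg at hne
  obtain ⟨n12, n13, n23⟩ := hne
  have d12 := (pc_iff.1 hψ).2 h1.1 h2.1 n12
  have d13 := (pc_iff.1 hψ).2 h1.1 h3.1 n13
  have d23 := (pc_iff.1 hψ).2 h2.1 h3.1 n23
  rcases h1.2 with e1 | e1 <;> rcases h2.2 with e2 | e2 <;> rcases h3.2 with e3 | e3 <;>
    simp_all


lemma walk_interior {K : SimpleGraph V} {y z : V} (p : K.Walk y z) (hp : p.IsPath) :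
    ∀ v, v ∈ p.support → v ≠ y → v ≠ z →
      ∃ u1 u2, u1 ≠ u2 ∧ K.Adj v u1 ∧ K.Adj v u2 ∧ u1 ∈ p.support ∧ u2 ∈ p.support := by
  induction p with
  | nil =>
    intro v hv hvy _
    simp only [SimpleGraph.Walk.support_nil, List.mem_singleton] at hv
    exact absurd hv hvy
  | @cons y w z h q ih =>
    intro v hv hvy hvz
    rw [SimpleGraph.Walk.support_cons, List.mem_cons] at hv
    rcases hv with rfl | hv
    · exact absurd rfl hvy
    by_cases hvw : v = w
    · subst hvw
      cases q with
      | nil => exact absurd rfl hvz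
      | @cons w t z h' q' =>
        rw [SimpleGraph.Walk.cons_isPath_iff] at hp
        have ht : t ∈ (SimpleGraph.Walk.cons h' q').support := by
          rw [SimpleGraph.Walk.support_cons]
          exact List.mem_cons_of_mem _ q'.start_mem_support
        refine ⟨y, t, fun hyt => hp.2 (hyt ▸ ht), h.symm, h', ?_, ?_⟩
        · rw [SimpleGraph.Walk.support_cons]; exact List.mem_cons_self
        · rw [SimpleGraph.Walk.support_cons]; exact List.mem_cons_of_mem _ ht
    · obtain ⟨u1, u2, hne, a1, a2, s1, s2⟩ :=
        ih ((SimpleGraph.Walk.cons_isPath_iff _ _).1 hp).1 v hv hvw hvz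
      refine ⟨u1, u2, hne, a1, a2, ?_, ?_⟩ <;>
        rw [SimpleGraph.Walk.support_cons]
      · exact List.mem_cons_of_mem _ s1
      · exact List.mem_cons_of_mem _ s2

lemma walk_first_meet {K : SimpleGraph V} {x y : V} (q : K.Walk x y) (S : V → Prop)
    (hy : S y) : ¬ S x → ∃ m u, S m ∧ ¬ S u ∧ K.Adj u m := by
  induction q with
  | nil => intro hx; exact absurd hy hx
  | @cons x w y h q ih =>
    intro hx
    by_cases hw : S w
    · exact ⟨w, x, hw, hx, h⟩
    · exact ih hy hw

lemma walk_start_adj {K : SimpleGraph V} {y z : V} (p : K.Walk y z) (h : y ≠ z) :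
    ∃ n, K.Adj y n ∧ n ∈ p.support := by
  cases p with
  | nil => exact absurd rfl h
  | @cons y w z h' q =>
    refine ⟨w, h', ?_⟩
    rw [SimpleGraph.Walk.support_cons]
    exact List.mem_cons_of_mem _ q.start_mem_support

lemma three_pendant {K : SimpleGraph V} {x y z : V}
    (hK : ∀ v u1 u2 u3, K.Adj v u1 → K.Adj v u2 → K.Adj v u3 → u1 = u2 ∨ u1 = u3 ∨ u2 = u3)
    (hx : ∀ u1 u2, K.Adj x u1 → K.Adj x u2 → u1 = u2)
    (hy : ∀ u1 u2, K.Adj y u1 → K.Adj y u2 → u1 = u2)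
    (hz : ∀ u1 u2, K.Adj z u1 → K.Adj z u2 → u1 = u2)
    (hxy : x ≠ y) (hxz : x ≠ z) (hyz : y ≠ z)
    (rxy : K.Reachable x y) (rxz : K.Reachable x z) : False := by
  obtain ⟨p0⟩ := rxy.symm.trans rxz
  obtain ⟨p, hp⟩ := p0.toPath
  by_cases hxp : x ∈ p.support
  · obtain ⟨u1, u2, hne, a1, a2, _, _⟩ := walk_interior p hp x hxp hxy hxz
    exact hne (hx u1 u2 a1 a2)
  · obtain ⟨q⟩ := rxy
    obtain ⟨m, u, hm, hu, adj⟩ := walk_first_meet q (· ∈ p.support) p.start_mem_support hxp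
    by_cases hmy : m = y
    · subst hmy
      obtain ⟨n, hn, hns⟩ := walk_start_adj p hyz
      exact hu ((hy u n adj.symm hn) ▸ hns)
    by_cases hmz : m = z
    · subst hmz
      obtain ⟨n, hn, hns⟩ := walk_start_adj p.reverse hyz.symm
      rw [SimpleGraph.Walk.support_reverse, List.mem_reverse] at hns
      exact hu ((hz u n adj.symm hn) ▸ hns)
    · obtain ⟨u1, u2, hne, a1, a2, s1, s2⟩ := walk_interior p hp m hm hmy hmz
      rcases hK m u u1 u2 adj.symm a1 a2 with rfl | rfl | h
      · exact hu s1
      · exact hu s2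
      · exact hne h


lemma m5_eq {G : SimpleGraph V} {Δ : ℕ} {ψ : Sym2 V → ℕ} {y0 y1 v : V} :
    m5 G Δ ψ y0 y1 v = missing (G.deleteEdges {s(y0, y1)}) Δ ψ v := rfl

lemma mem_m5 {G : SimpleGraph V} {Δ : ℕ} {ψ : Sym2 V → ℕ} {y0 y1 v : V} {c : ℕ} :
    c ∈ m5 G Δ ψ y0 y1 v ↔ c ∈ Finset.Icc 1 Δ ∧
      ∀ u, (G.deleteEdges {s(y0, y1)}).Adj v u → ψ s(v, u) ≠ c := mem_missing

lemma gd_adj {G : SimpleGraph V} {y0 y1 u v : V} :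
    (G.deleteEdges {s(y0, y1)}).Adj u v ↔ G.Adj u v ∧ s(u, v) ≠ s(y0, y1) := by
  rw [SimpleGraph.deleteEdges_adj]; simp

lemma recolor_proper {H : SimpleGraph V} {k : ℕ} {ψ : Sym2 V → ℕ}
    (hψ : IsProperEdgeColoring H k ψ) {x y : V} {c : ℕ} (hxy : H.Adj x y)
    (hcI : c ∈ Finset.Icc 1 k) (hcx : c ∈ missing H k ψ x) (hcy : c ∈ missing H k ψ y) :
    IsProperEdgeColoring H k (fun e => if e = s(x, y) then c else ψ e) := by
  obtain ⟨hI, hP⟩ := pc_iff.1 hψ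
  obtain ⟨_, hcxm⟩ := mem_missing.1 hcx
  obtain ⟨_, hcym⟩ := mem_missing.1 hcy
  refine pc_iff.2 ⟨?_, ?_⟩
  · intro u v h
    by_cases he : s(u, v) = s(x, y)
    · simpa [he] using hcI
    · simpa [he] using hI h
  · intro v u1 u2 h1 h2 hne
    by_cases k1 : s(v, u1) = s(x, y) <;> by_cases k2 : s(v, u2) = s(x, y)
    · exact absurd (Sym2.congr_right.1 (k1.trans k2.symm)) hne
    · simp only [k1, if_pos rfl, if_neg k2]
      rcases Sym2.eq_iff.1 k1 with ⟨rfl, rfl⟩ | ⟨rfl, rfl⟩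
      · exact (hcxm u2 h2).symm
      · exact (hcym u2 h2).symm
    · simp only [k2, if_pos rfl, if_neg k1]
      rcases Sym2.eq_iff.1 k2 with ⟨rfl, rfl⟩ | ⟨rfl, rfl⟩
      · exact hcxm u1 h1
      · exact hcym u1 h1
    · simp only [if_neg k1, if_neg k2]
      exact hP h1 h2 hne

lemma recolor_missing_old {H : SimpleGraph V} {k : ℕ} {ψ : Sym2 V → ℕ}
    (hψ : IsProperEdgeColoring H k ψ) {x y : V} {c : ℕ} (hxy : H.Adj x y)
    (hcx : c ∈ missing H k ψ x) :
    ψ s(x, y) ∈ missing H k (fun e => if e = s(x, y) then c else ψ e) x := by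
  obtain ⟨hI, hP⟩ := pc_iff.1 hψ
  rw [mem_missing]
  refine ⟨hI hxy, fun u hu => ?_⟩
  by_cases he : s(x, u) = s(x, y)
  · have : u = y := Sym2.congr_right.1 he
    subst this
    simp only [if_pos rfl]
    exact fun h => (mem_missing.1 hcx).2 u hu h.symm
  · simp only [if_neg he]
    exact hP hu hxy (fun h => he (by rw [h]))

lemma recolor_missing_other {H : SimpleGraph V} {k : ℕ} {ψ : Sym2 V → ℕ}
    {x y v : V} {c θ : ℕ} (hvx : v ≠ x) (hvy : v ≠ y) :
    θ ∈ missing H k (fun e => if e = s(x, y) then c else ψ e) v ↔ θ ∈ missing H k ψ v := by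
  rw [mem_missing, mem_missing]
  refine and_congr_right fun _ => ?_
  have key : ∀ u : V, s(v, u) ≠ s(x, y) := by
    intro u h
    rcases Sym2.eq_iff.1 h with ⟨h1, _⟩ | ⟨h1, _⟩
    exacts [hvx h1, hvy h1]
  constructor <;> intro hm u hu
  · have := hm u hu; simpa [key u] using this
  · simpa [key u] using hm u hu

structure Ctx (G : SimpleGraph V) (Δ : ℕ) (y0 y1 y2 y3 : V) : Prop where
  hG1 : ¬ ∃ ψ, IsProperEdgeColoring G Δ ψ
  h01 : G.Adj y0 y1
  h12 : G.Adj y1 y2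
  h23 : G.Adj y2 y3
  n01 : y0 ≠ y1
  n02 : y0 ≠ y2
  n03 : y0 ≠ y3
  n12 : y1 ≠ y2
  n13 : y1 ≠ y3
  n23 : y2 ≠ y3
  hS1 : ∃ S : Finset V, (∀ u, (G.deleteEdges {s(y0, y1)}).Adj y1 u → u ∈ S) ∧ S.card < Δ

variable {G : SimpleGraph V} {Δ : ℕ} {y0 y1 y2 y3 : V}

lemma Ctx.gd12 (C : Ctx G Δ y0 y1 y2 y3) : (G.deleteEdges {s(y0, y1)}).Adj y1 y2 := by
  refine gd_adj.2 ⟨C.h12, fun h => ?_⟩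
  rcases Sym2.eq_iff.1 h with ⟨h1, _⟩ | ⟨_, h2⟩
  exacts [C.n01 h1.symm, C.n02 h2.symm]

lemma Ctx.gd23 (C : Ctx G Δ y0 y1 y2 y3) : (G.deleteEdges {s(y0, y1)}).Adj y2 y3 := by
  refine gd_adj.2 ⟨C.h23, fun h => ?_⟩
  rcases Sym2.eq_iff.1 h with ⟨h1, _⟩ | ⟨h1, _⟩
  exacts [C.n02 h1.symm, C.n12 h1.symm]

lemma Ctx.L1 (C : Ctx G Δ y0 y1 y2 y3) {ψ : Sym2 V → ℕ}
    (hψ : IsProperEdgeColoring (G.deleteEdges {s(y0, y1)}) Δ ψ) {α : ℕ}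
    (h0 : α ∈ m5 G Δ ψ y0 y1 y0) (h1 : α ∈ m5 G Δ ψ y0 y1 y1) : False :=
  extend_contra G Δ y0 y1 C.hG1 C.h01 hψ h0 h1

lemma Ctx.L2 (C : Ctx G Δ y0 y1 y2 y3) {ψ : Sym2 V → ℕ}
    (hψ : IsProperEdgeColoring (G.deleteEdges {s(y0, y1)}) Δ ψ)
    (hH2 : ψ s(y1, y2) ∈ m5 G Δ ψ y0 y1 y0) {α : ℕ}
    (h1 : α ∈ m5 G Δ ψ y0 y1 y1) (h2 : α ∈ m5 G Δ ψ y0 y1 y2) : False := by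
  have hαI : α ∈ Finset.Icc 1 Δ := (mem_m5.1 h1).1
  set ψ' := fun e => if e = s(y1, y2) then α else ψ e with hψ'def
  have hψ' : IsProperEdgeColoring (G.deleteEdges {s(y0, y1)}) Δ ψ' :=
    recolor_proper hψ C.gd12 hαI h1 h2
  have hβ1 : ψ s(y1, y2) ∈ missing (G.deleteEdges {s(y0, y1)}) Δ ψ' y1 := recolor_missing_old hψ C.gd12 h1
  have hβ0 : ψ s(y1, y2) ∈ missing (G.deleteEdges {s(y0, y1)}) Δ ψ' y0 :=
    (recolor_missing_other C.n01 C.n02).2 hH2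
  exact C.L1 hψ' hβ0 hβ1

lemma Ctx.L3 (C : Ctx G Δ y0 y1 y2 y3) {ψ : Sym2 V → ℕ}
    (hψ : IsProperEdgeColoring (G.deleteEdges {s(y0, y1)}) Δ ψ)
    (hH2 : ψ s(y1, y2) ∈ m5 G Δ ψ y0 y1 y0) {α : ℕ}
    (h0 : α ∈ m5 G Δ ψ y0 y1 y0) (h2 : α ∈ m5 G Δ ψ y0 y1 y2) : False := by
  classical
  obtain ⟨S, hS, hc⟩ := C.hS1
  obtain ⟨τ, hτ⟩ := missing_nonempty hψ S hS hc
  have hαI : α ∈ Finset.Icc 1 Δ := (mem_m5.1 h0).1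
  have hτI : τ ∈ Finset.Icc 1 Δ := (mem_missing.1 hτ).1
  have hτ0 : τ ∉ m5 G Δ ψ y0 y1 y0 := fun h => C.L1 hψ h hτ
  have hτ2 : τ ∉ m5 G Δ ψ y0 y1 y2 := fun h => C.L2 hψ hH2 hτ h
  have hατ : α ≠ τ := fun h => hτ0 (h ▸ h0)
  have hβα : ψ s(y1, y2) ≠ α := by
    rw [show s(y1, y2) = s(y2, y1) from Sym2.eq_swap]
    exact (mem_m5.1 h2).2 y1 C.gd12.symm
  have hβτ : ψ s(y1, y2) ≠ τ := (mem_missing.1 hτ).2 y2 C.gd12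
  have P0 := K_pendant (a := α) (b := τ) hψ (Or.inl h0)
  have P1 := K_pendant (a := α) (b := τ) hψ (Or.inr hτ)
  have P2 := K_pendant (a := α) (b := τ) hψ (Or.inl h2)
  by_cases hr : (KG (G.deleteEdges {s(y0, y1)}) ψ α τ).Reachable y0 y1
  · have hr02 : ¬ (KG (G.deleteEdges {s(y0, y1)}) ψ α τ).Reachable y0 y2 :=
      fun h => three_pendant (K_two hψ) P0 P1 P2 C.n01 C.n02 C.n12 hr h
    have hr21 : ¬ (KG (G.deleteEdges {s(y0, y1)}) ψ α τ).Reachable y2 y1 :=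
      fun h => hr02 (hr.trans h.symm)
    set ψ' := swp (G.deleteEdges {s(y0, y1)}) ψ α τ y2 with hψ'def
    have hψ' := swp_proper hψ hαI hτI y2
    have hτ2' : τ ∈ missing (G.deleteEdges {s(y0, y1)}) Δ ψ' y2 :=
      swp_flip (SimpleGraph.Reachable.refl y2) h2 hτI hατ
    have hτ1' : τ ∈ missing (G.deleteEdges {s(y0, y1)}) Δ ψ' y1 := (swp_missing_not_reach hr21 τ).2 hτ
    have hv : ψ' s(y1, y2) = ψ s(y1, y2) := swp_val_not_reach hr21
    have hH2' : ψ' s(y1, y2) ∈ missing (G.deleteEdges {s(y0, y1)}) Δ ψ' y0 := by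
      rw [hv]
      exact (swp_missing_not_ab hβα hβτ).2 hH2
    exact C.L2 hψ' hH2' hτ1' hτ2'
  · set ψ' := swp (G.deleteEdges {s(y0, y1)}) ψ α τ y0 with hψ'def
    have hτ0' : τ ∈ missing (G.deleteEdges {s(y0, y1)}) Δ ψ' y0 :=
      swp_flip (SimpleGraph.Reachable.refl y0) h0 hτI hατ
    have hτ1' : τ ∈ missing (G.deleteEdges {s(y0, y1)}) Δ ψ' y1 := (swp_missing_not_reach hr τ).2 hτ
    exact C.L1 (swp_proper hψ hαI hτI y0) hτ0' hτ1'

lemma Ctx.D23 (C : Ctx G Δ y0 y1 y2 y3) {ψ : Sym2 V → ℕ}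
    (hψ : IsProperEdgeColoring (G.deleteEdges {s(y0, y1)}) Δ ψ)
    (hH2 : ψ s(y1, y2) ∈ m5 G Δ ψ y0 y1 y0)
    (hH3 : ψ s(y2, y3) ∈ m5 G Δ ψ y0 y1 y0 ∨ ψ s(y2, y3) ∈ m5 G Δ ψ y0 y1 y1) {α : ℕ}
    (h2 : α ∈ m5 G Δ ψ y0 y1 y2) (h3 : α ∈ m5 G Δ ψ y0 y1 y3) : False := by
  have hαI : α ∈ Finset.Icc 1 Δ := (mem_m5.1 h2).1
  set ψ' := fun e => if e = s(y2, y3) then α else ψ e with hψ'def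
  have hψ' : IsProperEdgeColoring (G.deleteEdges {s(y0, y1)}) Δ ψ' :=
    recolor_proper hψ C.gd23 hαI h2 h3
  have hγ2' : ψ s(y2, y3) ∈ missing (G.deleteEdges {s(y0, y1)}) Δ ψ' y2 := recolor_missing_old hψ C.gd23 h2
  have hne : s(y1, y2) ≠ s(y2, y3) := by
    intro h
    rcases Sym2.eq_iff.1 h with ⟨h1, _⟩ | ⟨h1, _⟩
    exacts [C.n12 h1, C.n13 h1]
  have hH2' : ψ' s(y1, y2) ∈ missing (G.deleteEdges {s(y0, y1)}) Δ ψ' y0 := by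
    have hv : ψ' s(y1, y2) = ψ s(y1, y2) := by simp only [hψ'def, if_neg hne]
    rw [hv]
    exact (recolor_missing_other C.n02 C.n03).2 hH2
  rcases hH3 with h | h
  · exact C.L3 hψ' hH2' ((recolor_missing_other C.n02 C.n03).2 h) hγ2'
  · exact C.L2 hψ' hH2' ((recolor_missing_other C.n12 C.n13).2 h) hγ2'

lemma Ctx.D13 (C : Ctx G Δ y0 y1 y2 y3) {ψ : Sym2 V → ℕ}
    (hψ : IsProperEdgeColoring (G.deleteEdges {s(y0, y1)}) Δ ψ)
    (hH2 : ψ s(y1, y2) ∈ m5 G Δ ψ y0 y1 y0)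
    (hH3 : ψ s(y2, y3) ∈ m5 G Δ ψ y0 y1 y0 ∨ ψ s(y2, y3) ∈ m5 G Δ ψ y0 y1 y1)
    (hS2 : ∃ S : Finset V, (∀ u, (G.deleteEdges {s(y0, y1)}).Adj y2 u → u ∈ S) ∧ S.card < Δ)
    {α : ℕ} (h1 : α ∈ m5 G Δ ψ y0 y1 y1) (h3 : α ∈ m5 G Δ ψ y0 y1 y3) : False := by
  obtain ⟨S, hS, hc⟩ := hS2
  obtain ⟨σ, hσ⟩ := missing_nonempty hψ S hS hc
  have hαI : α ∈ Finset.Icc 1 Δ := (mem_m5.1 h1).1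
  have hσI : σ ∈ Finset.Icc 1 Δ := (mem_missing.1 hσ).1
  have hσ1 : σ ∉ m5 G Δ ψ y0 y1 y1 := fun h => C.L2 hψ hH2 h hσ
  have hασ : α ≠ σ := fun h => hσ1 (h ▸ h1)
  have hβα : ψ s(y1, y2) ≠ α := (mem_m5.1 h1).2 y2 C.gd12
  have hβσ : ψ s(y1, y2) ≠ σ := by
    rw [show s(y1, y2) = s(y2, y1) from Sym2.eq_swap]
    exact (mem_missing.1 hσ).2 y1 C.gd12.symm
  have hγα : ψ s(y2, y3) ≠ α := by
    rw [show s(y2, y3) = s(y3, y2) from Sym2.eq_swap]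
    exact (mem_m5.1 h3).2 y2 C.gd23.symm
  have hγσ : ψ s(y2, y3) ≠ σ := (mem_missing.1 hσ).2 y3 C.gd23
  have P1 := K_pendant (a := α) (b := σ) hψ (Or.inl h1)
  have P2 := K_pendant (a := α) (b := σ) hψ (Or.inr hσ)
  have P3 := K_pendant (a := α) (b := σ) hψ (Or.inl h3)
  by_cases hr : (KG (G.deleteEdges {s(y0, y1)}) ψ α σ).Reachable y3 y2
  · have h31 : ¬ (KG (G.deleteEdges {s(y0, y1)}) ψ α σ).Reachable y3 y1 :=
      fun h => three_pendant (K_two hψ) P3 P2 P1 C.n23.symm C.n13.symm C.n12.symm hr h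
    have h12' : ¬ (KG (G.deleteEdges {s(y0, y1)}) ψ α σ).Reachable y1 y2 :=
      fun h => h31 (hr.trans h.symm)
    set ψ' := swp (G.deleteEdges {s(y0, y1)}) ψ α σ y1 with hψ'def
    have hψ' := swp_proper hψ hαI hσI y1
    have hσ1' : σ ∈ missing (G.deleteEdges {s(y0, y1)}) Δ ψ' y1 :=
      swp_flip (SimpleGraph.Reachable.refl y1) h1 hσI hασ
    have hσ2' : σ ∈ missing (G.deleteEdges {s(y0, y1)}) Δ ψ' y2 := (swp_missing_not_reach h12' σ).2 hσ
    have hH2' : ψ' s(y1, y2) ∈ missing (G.deleteEdges {s(y0, y1)}) Δ ψ' y0 := by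
      rw [hψ'def, swp_val_not_ab hβα hβσ]
      exact (swp_missing_not_ab hβα hβσ).2 hH2
    exact C.L2 hψ' hH2' hσ1' hσ2'
  · set ψ' := swp (G.deleteEdges {s(y0, y1)}) ψ α σ y3 with hψ'def
    have hψ' := swp_proper hψ hαI hσI y3
    have hσ3' : σ ∈ missing (G.deleteEdges {s(y0, y1)}) Δ ψ' y3 :=
      swp_flip (SimpleGraph.Reachable.refl y3) h3 hσI hασ
    have hσ2' : σ ∈ missing (G.deleteEdges {s(y0, y1)}) Δ ψ' y2 := (swp_missing_not_reach hr σ).2 hσ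
    have hH2' : ψ' s(y1, y2) ∈ missing (G.deleteEdges {s(y0, y1)}) Δ ψ' y0 := by
      rw [hψ'def, swp_val_not_ab hβα hβσ]
      exact (swp_missing_not_ab hβα hβσ).2 hH2
    have hH3' : ψ' s(y2, y3) ∈ missing (G.deleteEdges {s(y0, y1)}) Δ ψ' y0 ∨ ψ' s(y2, y3) ∈ missing (G.deleteEdges {s(y0, y1)}) Δ ψ' y1 := by
      rw [hψ'def, swp_val_not_ab hγα hγσ]
      rcases hH3 with h | h
      · exact Or.inl ((swp_missing_not_ab hγα hγσ).2 h)
      · exact Or.inr ((swp_missing_not_ab hγα hγσ).2 h)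
    exact C.D23 hψ' hH2' hH3' hσ2' hσ3'

lemma KG_comm {H : SimpleGraph V} {ψ : Sym2 V → ℕ} {a b : ℕ} :
    KG H ψ a b = KG H ψ b a := by
  ext u v
  show H.Adj u v ∧ _ ↔ H.Adj u v ∧ _
  tauto

lemma Ctx.B (C : Ctx G Δ y0 y1 y2 y3) {ψ : Sym2 V → ℕ}
    (hψ : IsProperEdgeColoring (G.deleteEdges {s(y0, y1)}) Δ ψ)
    (hH2 : ψ s(y1, y2) ∈ m5 G Δ ψ y0 y1 y0)
    (hH3 : ψ s(y2, y3) ∈ m5 G Δ ψ y0 y1 y0 ∨ ψ s(y2, y3) ∈ m5 G Δ ψ y0 y1 y1)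
    (hS2 : ∃ S : Finset V, (∀ u, (G.deleteEdges {s(y0, y1)}).Adj y2 u → u ∈ S) ∧ S.card < Δ)
    (hβ3 : ψ s(y1, y2) ∈ m5 G Δ ψ y0 y1 y3) : False := by
  have hpc := pc_iff.1 hψ
  have hβI : ψ s(y1, y2) ∈ Finset.Icc 1 Δ := hpc.1 C.gd12
  have hγI : ψ s(y2, y3) ∈ Finset.Icc 1 Δ := hpc.1 C.gd23
  have hβγ : ψ s(y1, y2) ≠ ψ s(y2, y3) := by
    have := hpc.2 C.gd12.symm C.gd23 C.n13
    rw [show s(y2, y1) = s(y1, y2) from Sym2.eq_swap] at this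
    exact this
  by_cases hγ1 : ψ s(y2, y3) ∈ m5 G Δ ψ y0 y1 y1
  · -- direct recoloring of e1, e2, e3 gives a proper Δ-coloring of G
    set β := ψ s(y1, y2) with hβdef
    set γ := ψ s(y2, y3) with hγdef
    set χ : Sym2 V → ℕ := fun e =>
      if e = s(y0, y1) then β else if e = s(y1, y2) then γ
        else if e = s(y2, y3) then β else ψ e with hχdef
    have ne1 : s(y1, y2) ≠ s(y0, y1) := (gd_adj.1 C.gd12).2
    have ne2 : s(y2, y3) ≠ s(y0, y1) := (gd_adj.1 C.gd23).2
    have ne3 : s(y2, y3) ≠ s(y1, y2) := by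
      intro h
      rcases Sym2.eq_iff.1 h with ⟨h1, _⟩ | ⟨_, h2⟩
      exacts [C.n12 h1.symm, C.n13 (h2.symm)]
    have hv1 : χ s(y0, y1) = β := by simp [hχdef]
    have hv2 : χ s(y1, y2) = γ := by simp [hχdef, ne1]
    have hv3 : χ s(y2, y3) = β := by simp [hχdef, ne2, ne3]
    have hvo : ∀ w x : V, s(w, x) ≠ s(y0, y1) → s(w, x) ≠ s(y1, y2) →
        s(w, x) ≠ s(y2, y3) → χ s(w, x) = ψ s(w, x) := by
      intro w x k1 k2 k3; simp [hχdef, k1, k2, k3]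
    refine C.hG1 ⟨χ, pc_iff.2 ⟨?_, ?_⟩⟩
    · intro u v h
      by_cases k1 : s(u, v) = s(y0, y1)
      · rw [k1, hv1]; exact hβI
      by_cases k2 : s(u, v) = s(y1, y2)
      · rw [k2, hv2]; exact hγI
      by_cases k3 : s(u, v) = s(y2, y3)
      · rw [k3, hv3]; exact hβI
      · rw [hvo u v k1 k2 k3]
        exact hpc.1 (gd_adj.2 ⟨h, k1⟩)
    · intro v u1 u2 h1 h2 hne
      have hsne : s(v, u1) ≠ s(v, u2) := fun h => hne (Sym2.congr_right.1 h)
      -- helpers: a special edge's color differs from any other (ordinary) edge at v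
      have hA : ∀ x1 x2 : V, s(v, x1) = s(y0, y1) →
          (G.deleteEdges {s(y0, y1)}).Adj v x2 → s(v, x2) ≠ s(y1, y2) →
          β ≠ ψ s(v, x2) := by
        intro x1 x2 k1 hadj2 l2 h
        rcases Sym2.eq_iff.1 k1 with ⟨h0, _⟩ | ⟨h0, _⟩
        · rw [h0] at hadj2 h
          exact (mem_m5.1 hH2).2 x2 hadj2 h.symm
        · rw [h0] at hadj2 h l2
          have hx2 : x2 ≠ y2 := fun hh => l2 (by rw [hh])
          exact hpc.2 hadj2 C.gd12 hx2 h.symm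
      have hB : ∀ x1 x2 : V, s(v, x1) = s(y1, y2) →
          (G.deleteEdges {s(y0, y1)}).Adj v x2 → s(v, x2) ≠ s(y2, y3) →
          γ ≠ ψ s(v, x2) := by
        intro x1 x2 k1 hadj2 l2 h
        rcases Sym2.eq_iff.1 k1 with ⟨h0, _⟩ | ⟨h0, _⟩
        · rw [h0] at hadj2 h
          exact (mem_m5.1 hγ1).2 x2 hadj2 h.symm
        · rw [h0] at hadj2 h l2
          have hx2 : x2 ≠ y3 := fun hh => l2 (by rw [hh])
          exact hpc.2 hadj2 C.gd23 hx2 h.symm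
      have hC : ∀ x1 x2 : V, s(v, x1) = s(y2, y3) →
          (G.deleteEdges {s(y0, y1)}).Adj v x2 → s(v, x2) ≠ s(y1, y2) →
          β ≠ ψ s(v, x2) := by
        intro x1 x2 k1 hadj2 l2 h
        rcases Sym2.eq_iff.1 k1 with ⟨h0, _⟩ | ⟨h0, _⟩
        · rw [h0] at hadj2 h l2
          have hx2 : x2 ≠ y1 := fun hh => l2 (by rw [hh, Sym2.eq_swap])
          have hval : β = ψ s(y2, y1) := (congrArg ψ (Sym2.eq_swap)).symm
          exact hpc.2 hadj2 C.gd12.symm hx2 (hval ▸ h).symm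
        · rw [h0] at hadj2 h
          exact (mem_m5.1 hβ3).2 x2 hadj2 h.symm
      have imp13 : ∀ x1 x2 : V, s(v, x1) = s(y0, y1) → s(v, x2) = s(y2, y3) → False := by
        intro x1 x2 k1 k2
        rcases Sym2.eq_iff.1 k1 with ⟨h0, _⟩ | ⟨h0, _⟩ <;>
          rcases Sym2.eq_iff.1 k2 with ⟨h0', _⟩ | ⟨h0', _⟩
        exacts [C.n02 (h0 ▸ h0'), C.n03 (h0 ▸ h0'), C.n12 (h0 ▸ h0'), C.n13 (h0 ▸ h0')]
      have hcls : ∀ x : V, G.Adj v x →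
          (s(v, x) = s(y0, y1) ∧ χ s(v, x) = β) ∨
          (s(v, x) = s(y1, y2) ∧ χ s(v, x) = γ) ∨
          (s(v, x) = s(y2, y3) ∧ χ s(v, x) = β) ∨
          ((G.deleteEdges {s(y0, y1)}).Adj v x ∧ s(v, x) ≠ s(y0, y1) ∧
            s(v, x) ≠ s(y1, y2) ∧ s(v, x) ≠ s(y2, y3) ∧ χ s(v, x) = ψ s(v, x)) := by
        intro x hx
        by_cases k1 : s(v, x) = s(y0, y1)
        · exact Or.inl ⟨k1, by rw [k1, hv1]⟩
        by_cases k2 : s(v, x) = s(y1, y2)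
        · exact Or.inr (Or.inl ⟨k2, by rw [k2, hv2]⟩)
        by_cases k3 : s(v, x) = s(y2, y3)
        · exact Or.inr (Or.inr (Or.inl ⟨k3, by rw [k3, hv3]⟩))
        · exact Or.inr (Or.inr (Or.inr ⟨gd_adj.2 ⟨hx, k1⟩, k1, k2, k3, hvo v x k1 k2 k3⟩))
      rcases hcls u1 h1 with ⟨k1, w1⟩ | ⟨k1, w1⟩ | ⟨k1, w1⟩ | ⟨ha1, ka1, kb1, kc1, w1⟩ <;>
        rcases hcls u2 h2 with ⟨k2, w2⟩ | ⟨k2, w2⟩ | ⟨k2, w2⟩ | ⟨ha2, ka2, kb2, kc2, w2⟩ <;>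
        rw [w1, w2]
      · exact absurd (k1.trans k2.symm) hsne
      · exact hβγ
      · exact absurd (imp13 u1 u2 k1 k2) id
      · exact hA u1 u2 k1 ha2 kb2
      · exact hβγ.symm
      · exact absurd (k1.trans k2.symm) hsne
      · -- e2 vs e3 : γ vs β
        exact fun h => hβγ h.symm
      · exact hB u1 u2 k1 ha2 kc2
      · exact absurd (imp13 u2 u1 k2 k1) id
      · exact hβγ
      · exact absurd (k1.trans k2.symm) hsne
      · exact hC u1 u2 k1 ha2 kb2
      · exact fun h => hA u2 u1 k2 ha1 kb1 h.symm
      · exact fun h => hB u2 u1 k2 ha1 kc1 h.symm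
      · exact fun h => hC u2 u1 k2 ha1 kb1 h.symm
      · exact hpc.2 ha1 ha2 hne
  · -- Kempe chain case : γ is missing at y0
    have hγ0 : ψ s(y2, y3) ∈ m5 G Δ ψ y0 y1 y0 := hH3.resolve_right hγ1
    obtain ⟨S, hS, hc⟩ := C.hS1
    obtain ⟨τ, hτ⟩ := missing_nonempty hψ S hS hc
    have hτI : τ ∈ Finset.Icc 1 Δ := (mem_missing.1 hτ).1
    have hτ0 : τ ∉ m5 G Δ ψ y0 y1 y0 := fun h => C.L1 hψ h hτ
    have hτ3 : τ ∉ m5 G Δ ψ y0 y1 y3 := fun h => C.D13 hψ hH2 hH3 hS2 hτ h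
    have hβτ : ψ s(y1, y2) ≠ τ := (mem_missing.1 hτ).2 y2 C.gd12
    have hγτ : ψ s(y2, y3) ≠ τ := fun h => hτ0 (h ▸ hγ0)
    have P1 := K_pendant (a := τ) (b := ψ s(y1, y2)) hψ (Or.inl hτ)
    have P0 := K_pendant (a := τ) (b := ψ s(y1, y2)) hψ (Or.inr hH2)
    have P3 := K_pendant (a := τ) (b := ψ s(y1, y2)) hψ (Or.inr hβ3)
    by_cases hr : (KG (G.deleteEdges {s(y0, y1)}) ψ τ (ψ s(y1, y2))).Reachable y1 y0
    · have h13 : ¬ (KG (G.deleteEdges {s(y0, y1)}) ψ τ (ψ s(y1, y2))).Reachable y1 y3 :=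
        fun h => three_pendant (K_two hψ) P1 P0 P3 C.n01.symm C.n13 C.n03 hr h
      have adj12 : (KG (G.deleteEdges {s(y0, y1)}) ψ τ (ψ s(y1, y2))).Adj y1 y2 :=
        ⟨C.gd12, Or.inr rfl⟩
      have h32 : ¬ (KG (G.deleteEdges {s(y0, y1)}) ψ τ (ψ s(y1, y2))).Reachable y3 y2 :=
        fun h => h13 (adj12.reachable.trans h.symm)
      have h31 : ¬ (KG (G.deleteEdges {s(y0, y1)}) ψ τ (ψ s(y1, y2))).Reachable y3 y1 :=
        fun h => h13 h.symm
      have h30 : ¬ (KG (G.deleteEdges {s(y0, y1)}) ψ τ (ψ s(y1, y2))).Reachable y3 y0 :=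
        fun h => h13 (hr.trans h.symm)
      -- switch orientation
      rw [KG_comm] at h32 h31 h30
      set ψ' := swp (G.deleteEdges {s(y0, y1)}) ψ (ψ s(y1, y2)) τ y3 with hψ'def
      have hψ' := swp_proper hψ hβI hτI y3
      have hτ3' : τ ∈ missing (G.deleteEdges {s(y0, y1)}) Δ ψ' y3 :=
        swp_flip (SimpleGraph.Reachable.refl y3) hβ3 hτI hβτ
      have hτ1' : τ ∈ missing (G.deleteEdges {s(y0, y1)}) Δ ψ' y1 := (swp_missing_not_reach h31 τ).2 hτ
      have hv2' : ψ' s(y1, y2) = ψ s(y1, y2) := swp_val_not_reach h31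
      have hH2' : ψ' s(y1, y2) ∈ missing (G.deleteEdges {s(y0, y1)}) Δ ψ' y0 := by
        rw [hv2']
        exact (swp_missing_not_reach h30 _).2 hH2
      have hv3' : ψ' s(y2, y3) = ψ s(y2, y3) := swp_val_not_reach h32
      have hH3' : ψ' s(y2, y3) ∈ missing (G.deleteEdges {s(y0, y1)}) Δ ψ' y0 ∨ ψ' s(y2, y3) ∈ missing (G.deleteEdges {s(y0, y1)}) Δ ψ' y1 := by
        rw [hv3']
        exact Or.inl ((swp_missing_not_ab hβγ.symm hγτ).2 hγ0)
      exact C.D13 hψ' hH2' hH3' hS2 hτ1' hτ3'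
    · set ψ' := swp (G.deleteEdges {s(y0, y1)}) ψ τ (ψ s(y1, y2)) y1 with hψ'def
      have hψ' := swp_proper hψ hτI hβI y1
      have hβ1' : ψ s(y1, y2) ∈ missing (G.deleteEdges {s(y0, y1)}) Δ ψ' y1 :=
        swp_flip (SimpleGraph.Reachable.refl y1) hτ hβI (fun h => hβτ h.symm)
      have hβ0' : ψ s(y1, y2) ∈ missing (G.deleteEdges {s(y0, y1)}) Δ ψ' y0 :=
        (swp_missing_not_reach hr _).2 hH2
      exact C.L1 hψ' hβ0' hβ1'

lemma Ctx.D03 (C : Ctx G Δ y0 y1 y2 y3) {ψ : Sym2 V → ℕ}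
    (hψ : IsProperEdgeColoring (G.deleteEdges {s(y0, y1)}) Δ ψ)
    (hH2 : ψ s(y1, y2) ∈ m5 G Δ ψ y0 y1 y0)
    (hH3 : ψ s(y2, y3) ∈ m5 G Δ ψ y0 y1 y0 ∨ ψ s(y2, y3) ∈ m5 G Δ ψ y0 y1 y1)
    (hS2 : ∃ S : Finset V, (∀ u, (G.deleteEdges {s(y0, y1)}).Adj y2 u → u ∈ S) ∧ S.card < Δ)
    {α : ℕ} (h0 : α ∈ m5 G Δ ψ y0 y1 y0) (h3 : α ∈ m5 G Δ ψ y0 y1 y3) : False := by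
  have hβ3 : ψ s(y1, y2) ∉ m5 G Δ ψ y0 y1 y3 := C.B hψ hH2 hH3 hS2
  have hαβ : α ≠ ψ s(y1, y2) := fun h => hβ3 (h ▸ h3)
  obtain ⟨S, hS, hc⟩ := hS2
  obtain ⟨σ, hσ⟩ := missing_nonempty hψ S hS hc
  have hαI : α ∈ Finset.Icc 1 Δ := (mem_m5.1 h0).1
  have hσI : σ ∈ Finset.Icc 1 Δ := (mem_missing.1 hσ).1
  have hσ0 : σ ∉ m5 G Δ ψ y0 y1 y0 := fun h => C.L3 hψ hH2 h hσ
  have hασ : α ≠ σ := fun h => hσ0 (h ▸ h0)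
  have hβα : ψ s(y1, y2) ≠ α := fun h => hαβ h.symm
  have hβσ : ψ s(y1, y2) ≠ σ := by
    rw [show s(y1, y2) = s(y2, y1) from Sym2.eq_swap]
    exact (mem_missing.1 hσ).2 y1 C.gd12.symm
  have hγα : ψ s(y2, y3) ≠ α := by
    rw [show s(y2, y3) = s(y3, y2) from Sym2.eq_swap]
    exact (mem_m5.1 h3).2 y2 C.gd23.symm
  have hγσ : ψ s(y2, y3) ≠ σ := (mem_missing.1 hσ).2 y3 C.gd23
  have P0 := K_pendant (a := α) (b := σ) hψ (Or.inl h0)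
  have P2 := K_pendant (a := α) (b := σ) hψ (Or.inr hσ)
  have P3 := K_pendant (a := α) (b := σ) hψ (Or.inl h3)
  by_cases hr : (KG (G.deleteEdges {s(y0, y1)}) ψ α σ).Reachable y3 y2
  · have h30 : ¬ (KG (G.deleteEdges {s(y0, y1)}) ψ α σ).Reachable y3 y0 :=
      fun h => three_pendant (K_two hψ) P3 P2 P0 C.n23.symm C.n03.symm C.n02.symm hr h
    have h02 : ¬ (KG (G.deleteEdges {s(y0, y1)}) ψ α σ).Reachable y0 y2 :=
      fun h => h30 (hr.trans h.symm)
    set ψ' := swp (G.deleteEdges {s(y0, y1)}) ψ α σ y0 with hψ'def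
    have hψ' := swp_proper hψ hαI hσI y0
    have hσ0' : σ ∈ missing (G.deleteEdges {s(y0, y1)}) Δ ψ' y0 :=
      swp_flip (SimpleGraph.Reachable.refl y0) h0 hσI hασ
    have hσ2' : σ ∈ missing (G.deleteEdges {s(y0, y1)}) Δ ψ' y2 := (swp_missing_not_reach h02 σ).2 hσ
    have hH2' : ψ' s(y1, y2) ∈ missing (G.deleteEdges {s(y0, y1)}) Δ ψ' y0 := by
      rw [hψ'def, swp_val_not_ab hβα hβσ]
      exact (swp_missing_not_ab hβα hβσ).2 hH2
    exact C.L3 hψ' hH2' hσ0' hσ2'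
  · set ψ' := swp (G.deleteEdges {s(y0, y1)}) ψ α σ y3 with hψ'def
    have hψ' := swp_proper hψ hαI hσI y3
    have hσ3' : σ ∈ missing (G.deleteEdges {s(y0, y1)}) Δ ψ' y3 :=
      swp_flip (SimpleGraph.Reachable.refl y3) h3 hσI hασ
    have hσ2' : σ ∈ missing (G.deleteEdges {s(y0, y1)}) Δ ψ' y2 := (swp_missing_not_reach hr σ).2 hσ
    have hH2' : ψ' s(y1, y2) ∈ missing (G.deleteEdges {s(y0, y1)}) Δ ψ' y0 := by
      rw [hψ'def, swp_val_not_ab hβα hβσ]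
      exact (swp_missing_not_ab hβα hβσ).2 hH2
    have hH3' : ψ' s(y2, y3) ∈ missing (G.deleteEdges {s(y0, y1)}) Δ ψ' y0 ∨ ψ' s(y2, y3) ∈ missing (G.deleteEdges {s(y0, y1)}) Δ ψ' y1 := by
      rw [hψ'def, swp_val_not_ab hγα hγσ]
      rcases hH3 with h | h
      · exact Or.inl ((swp_missing_not_ab hγα hγσ).2 h)
      · exact Or.inr ((swp_missing_not_ab hγα hγσ).2 h)
    exact C.D23 hψ' hH2' hH3' hσ2' hσ3'

end KP

theorem stmt5 (G : SimpleGraph V) [Fintype V] (Δ : ℕ) (hΔ : G.maxDegree = Δ)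
    (hG1 : ¬ ∃ ψ, IsProperEdgeColoring G Δ ψ)
    (hG2 : ∃ ψ, IsProperEdgeColoring G (Δ + 1) ψ)
    (y0 y1 y2 y3 : V)
    (h01 : G.Adj y0 y1) (h12 : G.Adj y1 y2) (h23 : G.Adj y2 y3)
    (hnodup : [y0, y1, y2, y3].Nodup)
    (φ : Sym2 V → ℕ)
    (hφ : IsProperEdgeColoring (G.deleteEdges {s(y0, y1)}) Δ φ)
    (he2 : φ s(y1, y2) ∈ m5 G Δ φ y0 y1 y0 ∪ m5 G Δ φ y0 y1 y1)
    (he3 : φ s(y2, y3) ∈ m5 G Δ φ y0 y1 y0 ∪ m5 G Δ φ y0 y1 y1 ∪ m5 G Δ φ y0 y1 y2) :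
    m5 G Δ φ y0 y1 y0 ∩ m5 G Δ φ y0 y1 y1 = ∅ ∧
    (G.degree y2 < Δ →
      ∀ u ∈ ({y0, y1, y2, y3} : Finset V), ∀ v ∈ ({y0, y1, y2, y3} : Finset V),
        u ≠ v → m5 G Δ φ y0 y1 u ∩ m5 G Δ φ y0 y1 v = ∅) := by
  classical
  simp only [List.nodup_cons, List.mem_cons, List.mem_singleton, List.not_mem_nil,
    or_false, not_or, List.nodup_nil, and_true] at hnodup
  obtain ⟨⟨n01, n02, n03⟩, ⟨n12, n13⟩, n23, -⟩ := hnodup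
  have hS1 : ∃ S : Finset V,
      (∀ u, (G.deleteEdges {s(y0, y1)}).Adj y1 u → u ∈ S) ∧ S.card < Δ := by
    refine ⟨(G.neighborFinset y1).erase y0, fun u hu => ?_, ?_⟩
    · obtain ⟨hadj, hne⟩ := KP.gd_adj.1 hu
      refine Finset.mem_erase.2 ⟨fun h => hne ?_, (SimpleGraph.mem_neighborFinset _ _ _).2 hadj⟩
      rw [h, Sym2.eq_swap]
    · have hmem : y0 ∈ G.neighborFinset y1 := (SimpleGraph.mem_neighborFinset _ _ _).2 h01.symm
      rw [Finset.card_erase_of_mem hmem]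
      have hb : (G.neighborFinset y1).card ≤ Δ := by
        rw [SimpleGraph.card_neighborFinset_eq_degree]
        exact hΔ ▸ G.degree_le_maxDegree y1
      have hp : 0 < (G.neighborFinset y1).card := Finset.card_pos.2 ⟨y0, hmem⟩
      omega
  have C : KP.Ctx G Δ y0 y1 y2 y3 :=
    ⟨hG1, h01, h12, h23, n01, n02, n03, n12, n13, n23, hS1⟩
  have hH2 : φ s(y1, y2) ∈ m5 G Δ φ y0 y1 y0 := by
    rcases Finset.mem_union.1 he2 with h | h
    · exact h
    · exact absurd rfl ((KP.mem_m5.1 h).2 y2 C.gd12)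
  have hH3 : φ s(y2, y3) ∈ m5 G Δ φ y0 y1 y0 ∨ φ s(y2, y3) ∈ m5 G Δ φ y0 y1 y1 := by
    rcases Finset.mem_union.1 he3 with h | h
    · exact Finset.mem_union.1 h
    · exact absurd rfl ((KP.mem_m5.1 h).2 y3 C.gd23)
  constructor
  · exact Finset.eq_empty_iff_forall_notMem.2 fun c hc =>
      C.L1 hφ (Finset.mem_inter.1 hc).1 (Finset.mem_inter.1 hc).2
  · intro hd2 u hu v hv huv
    have hS2 : ∃ S : Finset V,
        (∀ w, (G.deleteEdges {s(y0, y1)}).Adj y2 w → w ∈ S) ∧ S.card < Δ := by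
      refine ⟨G.neighborFinset y2, fun w hw => (SimpleGraph.mem_neighborFinset _ _ _).2
        (KP.gd_adj.1 hw).1, ?_⟩
      rw [SimpleGraph.card_neighborFinset_eq_degree]
      exact hd2
    have key : ∀ a b : V,
        (∀ c : ℕ, c ∈ m5 G Δ φ y0 y1 a → c ∈ m5 G Δ φ y0 y1 b → False) →
        m5 G Δ φ y0 y1 a ∩ m5 G Δ φ y0 y1 b = ∅ := fun a b h =>
      Finset.eq_empty_iff_forall_notMem.2 fun c hc =>
        h c (Finset.mem_inter.1 hc).1 (Finset.mem_inter.1 hc).2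
    have d01 : ∀ c : ℕ, c ∈ m5 G Δ φ y0 y1 y0 → c ∈ m5 G Δ φ y0 y1 y1 → False :=
      fun c h h' => C.L1 hφ h h'
    have d12 : ∀ c : ℕ, c ∈ m5 G Δ φ y0 y1 y1 → c ∈ m5 G Δ φ y0 y1 y2 → False :=
      fun c h h' => C.L2 hφ hH2 h h'
    have d02 : ∀ c : ℕ, c ∈ m5 G Δ φ y0 y1 y0 → c ∈ m5 G Δ φ y0 y1 y2 → False :=
      fun c h h' => C.L3 hφ hH2 h h'
    have d23 : ∀ c : ℕ, c ∈ m5 G Δ φ y0 y1 y2 → c ∈ m5 G Δ φ y0 y1 y3 → False :=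
      fun c h h' => C.D23 hφ hH2 hH3 h h'
    have d13 : ∀ c : ℕ, c ∈ m5 G Δ φ y0 y1 y1 → c ∈ m5 G Δ φ y0 y1 y3 → False :=
      fun c h h' => C.D13 hφ hH2 hH3 hS2 h h'
    have d03 : ∀ c : ℕ, c ∈ m5 G Δ φ y0 y1 y0 → c ∈ m5 G Δ φ y0 y1 y3 → False :=
      fun c h h' => C.D03 hφ hH2 hH3 hS2 h h'
    simp only [Finset.mem_insert, Finset.mem_singleton] at hu hv
    rcases hu with rfl | rfl | rfl | rfl <;> rcases hv with rfl | rfl | rfl | rfl <;>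
      first
        | exact absurd rfl huv
        | exact key _ _ d01
        | exact key _ _ d02
        | exact key _ _ d03
        | exact key _ _ d12
        | exact key _ _ d13
        | exact key _ _ d23
        | exact key _ _ (fun c h h' => d01 c h' h)
        | exact key _ _ (fun c h h' => d02 c h' h)
        | exact key _ _ (fun c h h' => d03 c h' h)
        | exact key _ _ (fun c h h' => d12 c h' h)
        | exact key _ _ (fun c h h' => d13 c h' h)
        | exact key _ _ (fun c h h' => d23 c h' h)
end

section
/- Let G be a simple edge-Δ-critical graph, xy ∈ E(G), φ ∈ C^Δ(G - xy), and q a positive number with d(x) < q ≤ Δ - 1. Let Z = {z ∈ N(x) \ {y} : d(z) > q and φ(xz) ∈ φ̄(y)}. Then |Z| ≥ Δ - d(y) + 1 - ⌊(d(x) + d(y) - Δ - 2)/(Δ - q)⌋. -/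
open Finset
open scoped Classical

variable {V : Type*}

set_option linter.unusedVariables false
set_option linter.unusedSectionVars false

lemma mem_missing {G : SimpleGraph V} {k : ℕ} {φ : Sym2 V → ℕ} {v : V} {c : ℕ} :
    c ∈ missing G k φ v ↔ c ∈ Finset.Icc 1 k ∧ ∀ u, G.Adj v u → φ s(v, u) ≠ c := by
  simp [missing]

lemma proper_ne {G : SimpleGraph V} {k : ℕ} {φ : Sym2 V → ℕ}
    (h : IsProperEdgeColoring G k φ) {a b c : V} (hab : G.Adj a b) (hac : G.Adj a c)
    (hbc : b ≠ c) : φ s(a, b) ≠ φ s(a, c) := by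
  refine h.2 _ hab _ hac (fun he => hbc (Sym2.congr_right.mp he)) ⟨a, ?_, ?_⟩ <;> simp

lemma walk_closure [Fintype V] :
    ∀ (n : ℕ) (H : SimpleGraph V), (∀ w, H.degree w ≤ 2) → ∀ {b c : V} (p : H.Walk b c),
      p.length = n → p.IsPath → H.degree b ≤ 1 →
      ∀ v w, v ∈ p.support → H.Adj v w → w ∈ p.support ∨ v = c := by
  intro n
  induction n using Nat.strong_induction_on with
  | _ n ih =>
    intro H hdeg b c p hlen hp hb v w hv hvw
    cases p with
    | nil =>
      simp only [SimpleGraph.Walk.support_nil, List.mem_singleton] at hv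
      right; exact hv
    | @cons _ b' _ hadj q =>
      rw [SimpleGraph.Walk.support_cons, List.mem_cons] at hv
      rw [SimpleGraph.Walk.cons_isPath_iff] at hp
      rcases hv with rfl | hv
      · -- v = b, so w must be b'
        have hwb' : w = b' := by
          by_contra hne
          have hsub : ({w, b'} : Finset V) ⊆ H.neighborFinset v := by
            intro t ht
            rw [Finset.mem_insert, Finset.mem_singleton] at ht
            rcases ht with rfl | rfl
            · exact (SimpleGraph.mem_neighborFinset _ _ _).mpr hvw
            · exact (SimpleGraph.mem_neighborFinset _ _ _).mpr hadj
          have := Finset.card_le_card hsub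
          rw [Finset.card_insert_of_notMem (by simp [hne]), Finset.card_singleton] at this
          exact absurd (le_trans this hb) (by norm_num)
        subst hwb'
        left
        rw [SimpleGraph.Walk.support_cons]
        exact List.mem_cons_of_mem _ q.start_mem_support
      · -- v in q.support
        have hvb : v ≠ b := fun h => hp.2 (h ▸ hv)
        by_cases hwb : w = b
        · left
          rw [SimpleGraph.Walk.support_cons, hwb]
          exact List.mem_cons_self
        · -- transfer to H' = H.deleteEdges {s(b,b')}
          set H' := H.deleteEdges {s(b, b')} with hH'
          have hqE : ∀ e ∈ q.edges, e ∈ H'.edgeSet := by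
            intro e he
            rw [SimpleGraph.edgeSet_deleteEdges]
            refine ⟨q.edges_subset_edgeSet he, ?_⟩
            intro hee
            rw [Set.mem_singleton_iff] at hee
            subst hee
            exact hp.2 (q.fst_mem_support_of_mem_edges he)
          have hsub : ∀ t, H'.neighborFinset t ⊆ H.neighborFinset t := by
            intro t u hu
            rw [SimpleGraph.mem_neighborFinset] at hu ⊢
            exact hu.1
          have hdeg' : ∀ u, H'.degree u ≤ 2 := fun u =>
            le_trans (Finset.card_le_card (hsub u)) (hdeg u)
          have hbb' : b ≠ b' := hadj.ne
          have hb'deg : H'.degree b' ≤ 1 := by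
            have hsub2 : H'.neighborFinset b' ⊆ (H.neighborFinset b').erase b := by
              intro u hu
              rw [SimpleGraph.mem_neighborFinset, hH', SimpleGraph.deleteEdges_adj,
                Set.mem_singleton_iff] at hu
              rw [Finset.mem_erase, SimpleGraph.mem_neighborFinset]
              refine ⟨fun h => ?_, hu.1⟩
              subst h
              exact hu.2 (Sym2.eq_swap)
            have h1 := Finset.card_le_card hsub2
            rw [Finset.card_erase_of_mem
              ((SimpleGraph.mem_neighborFinset _ _ _).mpr hadj.symm)] at h1
            have := hdeg b'
            unfold SimpleGraph.degree at *
            omega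
          have hq' : H'.Walk b' _ := q.transfer H' hqE
          have hvw' : H'.Adj v w := by
            rw [hH', SimpleGraph.deleteEdges_adj, Set.mem_singleton_iff]
            refine ⟨hvw, fun h => ?_⟩
            rw [Sym2.eq_iff] at h
            rcases h with ⟨h1, _⟩ | ⟨_, h2⟩
            · exact hvb h1
            · exact hwb h2
          have hlen' : (q.transfer H' hqE).length = q.length := q.length_transfer hqE
          have hlt : q.length < n := by rw [SimpleGraph.Walk.length_cons] at hlen; omega
          have := ih q.length hlt H' (fun u => by convert hdeg' u) (q.transfer H' hqE) hlen'
            (hp.1.transfer hqE) (by convert hb'deg) v w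
            (by rwa [SimpleGraph.Walk.support_transfer]) hvw'
          rcases this with h | h
          · left
            rw [SimpleGraph.Walk.support_transfer] at h
            rw [SimpleGraph.Walk.support_cons]
            exact List.mem_cons_of_mem _ h
          · right; exact h

lemma three_deg_one [Fintype V] (H : SimpleGraph V) (hdeg : ∀ w, H.degree w ≤ 2)
    {a b c : V} (hab : a ≠ b) (hac : a ≠ c) (hbc : b ≠ c)
    (ha : H.degree a ≤ 1) (hb : H.degree b ≤ 1) (hc : H.degree c ≤ 1)
    (h1 : H.Reachable b a) (h2 : H.Reachable b c) : False := by
  obtain ⟨p0⟩ := h2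
  set p : H.Walk b c := (p0.toPath : H.Path b c).1 with hpdef
  have hp : p.IsPath := p0.toPath.2
  have hcl : ∀ v w, v ∈ p.support → H.Adj v w → w ∈ p.support := by
    intro v w hv hvw
    rcases walk_closure p.length H hdeg p rfl hp hb v w hv hvw with h | h
    · exact h
    · subst h
      have hv' : v ∈ p.reverse.support := by
        rw [SimpleGraph.Walk.support_reverse, List.mem_reverse]; exact hv
      rcases walk_closure p.reverse.length H hdeg p.reverse rfl hp.reverse hc v w hv' hvw
        with h | h
      · rw [SimpleGraph.Walk.support_reverse, List.mem_reverse] at h; exact h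
      · exact absurd h.symm hbc
  have hmem : a ∈ p.support := by
    obtain ⟨qa⟩ := h1
    have key : ∀ {s t : V} (q : H.Walk s t), s ∈ p.support → t ∈ p.support := by
      intro s t q
      induction q with
      | nil => exact id
      | cons hadj q ih => exact fun hs => ih (hcl _ _ hs hadj)
    exact key qa p.start_mem_support
  obtain ⟨q, r, hqr⟩ := SimpleGraph.Walk.mem_support_iff_exists_append.mp hmem
  -- q : Walk b a, r : Walk a c
  -- successor w1
  obtain ⟨w1, hw1adj, hw1mem⟩ : ∃ w1, H.Adj a w1 ∧ w1 ∈ r.support.tail := by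
    cases r with
    | nil => exact absurd rfl hac
    | @cons _ w1 _ hadj r' =>
      refine ⟨w1, hadj, ?_⟩
      rw [SimpleGraph.Walk.support_cons, List.tail_cons]
      exact r'.start_mem_support
  obtain ⟨w2, hw2adj, hw2mem⟩ : ∃ w2, H.Adj a w2 ∧ w2 ∈ q.support := by
    have hnn : ¬ q.reverse.Nil := by
      rw [SimpleGraph.Walk.nil_iff_length_eq, SimpleGraph.Walk.length_reverse]
      intro h0
      exact hab (q.eq_of_length_eq_zero h0).symm
    obtain ⟨u, hadj, q'', hq''⟩ := SimpleGraph.Walk.not_nil_iff.mp hnn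
    refine ⟨u, hadj, ?_⟩
    have : u ∈ q.reverse.support := by
      rw [hq'', SimpleGraph.Walk.support_cons]
      exact List.mem_cons_of_mem _ q''.start_mem_support
    rwa [SimpleGraph.Walk.support_reverse, List.mem_reverse] at this
  have hnodup := hp.support_nodup
  rw [hqr, SimpleGraph.Walk.support_append, List.nodup_append] at hnodup
  have hne : w2 ≠ w1 := fun h => hnodup.2.2 w2 hw2mem w1 hw1mem h
  have hsub : ({w1, w2} : Finset V) ⊆ H.neighborFinset a := by
    intro t ht
    rw [Finset.mem_insert, Finset.mem_singleton] at ht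
    rcases ht with rfl | rfl
    · exact (SimpleGraph.mem_neighborFinset _ _ _).mpr hw1adj
    · exact (SimpleGraph.mem_neighborFinset _ _ _).mpr hw2adj
  have h2le := Finset.card_le_card hsub
  rw [Finset.card_insert_of_notMem (by simp [hne.symm]), Finset.card_singleton] at h2le
  exact absurd (le_trans h2le ha) (by norm_num)

lemma edge_of_mem {e : Sym2 V} {v : V} (he : v ∈ e) : ∃ w, e = s(v, w) :=
  ⟨Sym2.Mem.other he, (Sym2.other_spec he).symm⟩

section
variable [Fintype V] {G : SimpleGraph V} {Δ : ℕ} {x y : V} {φ : Sym2 V → ℕ}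

lemma memG' (hG : G.deleteEdges {s(x, y)} = G.deleteEdges {s(x, y)}) :
    ∀ e ∈ G.edgeSet, e ≠ s(x, y) → e ∈ (G.deleteEdges {s(x, y)}).edgeSet := by
  intro e he hne
  rw [SimpleGraph.edgeSet_deleteEdges]
  exact ⟨he, hne⟩

lemma lemA (hc : EdgeCritical G Δ) (hxy : G.Adj x y)
    (hφ : IsProperEdgeColoring (G.deleteEdges {s(x, y)}) Δ φ)
    {c : ℕ} (hcx : c ∈ missing (G.deleteEdges {s(x, y)}) Δ φ x)
    (hcy : c ∈ missing (G.deleteEdges {s(x, y)}) Δ φ y) : False := by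
  have hmem := memG' (G := G) (x := x) (y := y) rfl
  rw [mem_missing] at hcx hcy
  have key : ∀ f ∈ G.edgeSet, f ≠ s(x, y) → (∃ v, v ∈ s(x, y) ∧ v ∈ f) → φ f ≠ c := by
    rintro f hf hne ⟨v, hv1, hv2⟩
    obtain ⟨w, rfl⟩ := edge_of_mem hv2
    have hadj : (G.deleteEdges {s(x, y)}).Adj v w :=
      (SimpleGraph.mem_edgeSet _).mp (hmem _ hf hne)
    rw [Sym2.mem_iff] at hv1
    rcases hv1 with rfl | rfl
    · exact hcx.2 w hadj
    · exact hcy.2 w hadj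
  refine hc.2.1 ⟨fun e => if e = s(x, y) then c else φ e, ?_, ?_⟩
  · intro e he
    by_cases h : e = s(x, y)
    · simpa [h] using hcx.1
    · simpa [h] using hφ.1 e (hmem e he h)
  · rintro e he f hf hef ⟨v, hv1, hv2⟩
    by_cases h1 : e = s(x, y)
    · have h2 : f ≠ s(x, y) := fun h => hef (h1.trans h.symm)
      simp only [if_pos h1, if_neg h2]
      exact (key f hf h2 ⟨v, h1 ▸ hv1, hv2⟩).symm
    · by_cases h2 : f = s(x, y)
      · simp only [if_neg h1, if_pos h2]
        exact key e he h1 ⟨v, h2 ▸ hv2, hv1⟩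
      · simp only [if_neg h1, if_neg h2]
        exact hφ.2 e (hmem e he h1) f (hmem f hf h2) hef ⟨v, hv1, hv2⟩

lemma lemB (hc : EdgeCritical G Δ) (hxy : G.Adj x y)
    (hφ : IsProperEdgeColoring (G.deleteEdges {s(x, y)}) Δ φ)
    {z : V} (hxz : G.Adj x z) (hzy : z ≠ y)
    (hγ : φ s(x, z) ∈ missing (G.deleteEdges {s(x, y)}) Δ φ y)
    {c : ℕ} (hcx : c ∈ missing (G.deleteEdges {s(x, y)}) Δ φ x)
    (hcz : c ∈ missing (G.deleteEdges {s(x, y)}) Δ φ z) : False := by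
  have hmem := memG' (G := G) (x := x) (y := y) rfl
  have hxzy : s(x, z) ≠ s(x, y) := fun h => hzy (Sym2.congr_right.mp h)
  have hadjxz' : (G.deleteEdges {s(x, y)}).Adj x z := by
    rw [SimpleGraph.deleteEdges_adj]
    exact ⟨hxz, by simpa using hxzy⟩
  rw [mem_missing] at hγ hcx hcz
  have hgc : φ s(x, z) ≠ c := hcx.2 z hadjxz'
  have key1 : ∀ f ∈ G.edgeSet, f ≠ s(x, y) → f ≠ s(x, z) →
      (∃ v, v ∈ s(x, y) ∧ v ∈ f) → φ f ≠ φ s(x, z) := by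
    rintro f hf h1 h2 ⟨v, hv1, hv2⟩
    obtain ⟨w, rfl⟩ := edge_of_mem hv2
    have hadj : (G.deleteEdges {s(x, y)}).Adj v w :=
      (SimpleGraph.mem_edgeSet _).mp (hmem _ hf h1)
    rw [Sym2.mem_iff] at hv1
    rcases hv1 with rfl | rfl
    · exact proper_ne hφ hadj hadjxz' (fun h => h2 (by rw [h]))
    · exact hγ.2 w hadj
  have key2 : ∀ f ∈ G.edgeSet, f ≠ s(x, y) → f ≠ s(x, z) →
      (∃ v, v ∈ s(x, z) ∧ v ∈ f) → φ f ≠ c := by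
    rintro f hf h1 h2 ⟨v, hv1, hv2⟩
    obtain ⟨w, rfl⟩ := edge_of_mem hv2
    have hadj : (G.deleteEdges {s(x, y)}).Adj v w :=
      (SimpleGraph.mem_edgeSet _).mp (hmem _ hf h1)
    rw [Sym2.mem_iff] at hv1
    rcases hv1 with rfl | rfl
    · exact hcx.2 w hadj
    · exact hcz.2 w hadj
  refine hc.2.1 ⟨fun e => if e = s(x, y) then φ s(x, z) else if e = s(x, z) then c else φ e,
    ?_, ?_⟩
  · intro e he
    by_cases h1 : e = s(x, y)
    · simpa [h1] using hγ.1
    · by_cases h2 : e = s(x, z)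
      · simp only [if_neg h1, if_pos h2]
        exact hcx.1
      · simp only [if_neg h1, if_neg h2]
        exact hφ.1 e (hmem e he h1)
  · rintro e he f hf hef ⟨v, hv1, hv2⟩
    by_cases h1 : e = s(x, y)
    · have h2 : f ≠ s(x, y) := fun h => hef (h1.trans h.symm)
      by_cases h4 : f = s(x, z)
      · simp only [if_pos h1, if_neg h2, if_pos h4]
        exact hgc
      · simp only [if_pos h1, if_neg h2, if_neg h4]
        exact (key1 f hf h2 h4 ⟨v, h1 ▸ hv1, hv2⟩).symm
    · by_cases h2 : f = s(x, y)
      · by_cases h3 : e = s(x, z)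
        · simp only [if_neg h1, if_pos h3, if_pos h2]
          exact Ne.symm hgc
        · simp only [if_neg h1, if_neg h3, if_pos h2]
          exact key1 e he h1 h3 ⟨v, h2 ▸ hv2, hv1⟩
      · by_cases h3 : e = s(x, z)
        · have h4 : f ≠ s(x, z) := fun h => hef (h3.trans h.symm)
          simp only [if_neg h1, if_pos h3, if_neg h2, if_neg h4]
          exact (key2 f hf h2 h4 ⟨v, h3 ▸ hv1, hv2⟩).symm
        · by_cases h4 : f = s(x, z)
          · simp only [if_neg h1, if_neg h3, if_neg h2, if_pos h4]
            exact key2 e he h1 h3 ⟨v, h4 ▸ hv2, hv1⟩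
          · simp only [if_neg h1, if_neg h3, if_neg h2, if_neg h4]
            exact hφ.2 e (hmem e he h1) f (hmem f hf h2) hef ⟨v, hv1, hv2⟩

def chainGraph (G' : SimpleGraph V) (φ : Sym2 V → ℕ) (α β : ℕ) : SimpleGraph V where
  Adj a b := G'.Adj a b ∧ (φ s(a, b) = α ∨ φ s(a, b) = β)
  symm.symm a b h := ⟨h.1.symm, by rw [Sym2.eq_swap]; exact h.2⟩
  loopless.irrefl a h := G'.loopless.irrefl a h.1


lemma lemFinish (hc : EdgeCritical G Δ) (hxy : G.Adj x y)
    (hφ : IsProperEdgeColoring (G.deleteEdges {s(x, y)}) Δ φ)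
    {w : V} (hw : w = y ∨ (G.Adj x w ∧ w ≠ y ∧
      φ s(x, w) ∈ missing (G.deleteEdges {s(x, y)}) Δ φ y))
    {c : ℕ} (hcx : c ∈ missing (G.deleteEdges {s(x, y)}) Δ φ x)
    (hcw : c ∈ missing (G.deleteEdges {s(x, y)}) Δ φ w) : False := by
  rcases hw with rfl | ⟨hxw, hwy, hγ⟩
  · exact lemA hc hxy hφ hcx hcw
  · exact lemB hc hxy hφ hxw hwy hγ hcx hcw

lemma lemFlip (hc : EdgeCritical G Δ) (hxy : G.Adj x y)
    (hφ : IsProperEdgeColoring (G.deleteEdges {s(x, y)}) Δ φ)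
    {α β : ℕ} (hαβ : α ≠ β)
    (hα : α ∈ missing (G.deleteEdges {s(x, y)}) Δ φ x)
    {w : V} (hw : w = y ∨ (G.Adj x w ∧ w ≠ y ∧
      φ s(x, w) ∈ missing (G.deleteEdges {s(x, y)}) Δ φ y))
    (hβw : β ∈ missing (G.deleteEdges {s(x, y)}) Δ φ w)
    (hnr : ¬ (chainGraph (G.deleteEdges {s(x, y)}) φ α β).Reachable w x) : False := by
  set G' := G.deleteEdges {s(x, y)} with hG'def
  set H := chainGraph G' φ α β with hHdef
  set C : Set V := {t | H.Reachable w t} with hCdef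
  have hCadj : ∀ a b, H.Adj a b → a ∈ C → b ∈ C := fun a b hab ha => ha.trans hab.reachable
  set Flip : Sym2 V → Prop :=
    fun e => e ∈ G'.edgeSet ∧ (φ e = α ∨ φ e = β) ∧ ∃ a, a ∈ e ∧ a ∈ C with hFlipdef
  have F1 : ∀ e, Flip e → ∀ a, a ∈ e → a ∈ C := by
    intro e
    induction e using Sym2.ind with
    | _ p q =>
      intro hF a ha
      have hadj : H.Adj p q := ⟨(SimpleGraph.mem_edgeSet _).mp hF.1, hF.2.1⟩
      obtain ⟨b, hb1, hb2⟩ := hF.2.2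
      rw [Sym2.mem_iff] at hb1 ha
      rcases hb1 with rfl | rfl <;> rcases ha with rfl | rfl
      exacts [hb2, hCadj _ _ hadj hb2, hCadj _ _ hadj.symm hb2, hb2]
  set ψ : Sym2 V → ℕ := fun e => if Flip e then (if φ e = α then β else α) else φ e with hψdef
  have hαIcc : α ∈ Finset.Icc 1 Δ := (mem_missing.mp hα).1
  have hβIcc : β ∈ Finset.Icc 1 Δ := (mem_missing.mp hβw).1
  have hαx : ∀ u, G'.Adj x u → φ s(x, u) ≠ α := (mem_missing.mp hα).2
  have hβw' : ∀ u, G'.Adj w u → φ s(w, u) ≠ β := (mem_missing.mp hβw).2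
  have hψproper : IsProperEdgeColoring G' Δ ψ := by
    constructor
    · intro e he
      by_cases hF : Flip e
      · simp only [hψdef, if_pos hF]
        by_cases hh : φ e = α
        · rw [if_pos hh]; exact hβIcc
        · rw [if_neg hh]; exact hαIcc
      · simp only [hψdef, if_neg hF]
        exact hφ.1 e he
    · rintro e he f hf hef ⟨t, ht1, ht2⟩
      have hφne : φ e ≠ φ f := hφ.2 e he f hf hef ⟨t, ht1, ht2⟩
      by_cases hFe : Flip e <;> by_cases hFf : Flip f
      · simp only [hψdef, if_pos hFe, if_pos hFf]
        rcases hFe.2.1 with he1 | he1 <;> rcases hFf.2.1 with hf1 | hf1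
        · exact absurd (he1.trans hf1.symm) hφne
        · rw [if_pos he1, if_neg (by rw [hf1]; exact Ne.symm hαβ)]
          exact Ne.symm hαβ
        · rw [if_neg (by rw [he1]; exact Ne.symm hαβ), if_pos hf1]
          exact hαβ
        · exact absurd (he1.trans hf1.symm) hφne
      · have htC : t ∈ C := F1 e hFe t ht1
        have hfn : ¬ (φ f = α ∨ φ f = β) := fun hor => hFf ⟨hf, hor, t, ht2, htC⟩
        push_neg at hfn
        simp only [hψdef, if_pos hFe, if_neg hFf]
        by_cases hh : φ e = α
        · rw [if_pos hh]; exact fun h => hfn.2 h.symm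
        · rw [if_neg hh]; exact fun h => hfn.1 h.symm
      · have htC : t ∈ C := F1 f hFf t ht2
        have hen : ¬ (φ e = α ∨ φ e = β) := fun hor => hFe ⟨he, hor, t, ht1, htC⟩
        push_neg at hen
        simp only [hψdef, if_neg hFe, if_pos hFf]
        by_cases hh : φ f = α
        · rw [if_pos hh]; exact hen.2
        · rw [if_neg hh]; exact hen.1
      · simp only [hψdef, if_neg hFe, if_neg hFf]
        exact hφne
  have hxC : x ∉ C := hnr
  have M1 : α ∈ missing G' Δ ψ x := by
    rw [mem_missing]
    refine ⟨hαIcc, fun u hu => ?_⟩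
    by_cases hF : Flip s(x, u)
    · exact absurd (F1 _ hF x (Sym2.mem_mk_left _ _)) hxC
    · simp only [hψdef, if_neg hF]
      exact hαx u hu
  have M2 : α ∈ missing G' Δ ψ w := by
    rw [mem_missing]
    refine ⟨hαIcc, fun u hu => ?_⟩
    by_cases hF : Flip s(w, u)
    · simp only [hψdef, if_pos hF]
      rcases hF.2.1 with h | h
      · rw [if_pos h]; exact Ne.symm hαβ
      · exact absurd h (hβw' u hu)
    · simp only [hψdef, if_neg hF]
      intro hcontra
      exact hF ⟨(SimpleGraph.mem_edgeSet _).mpr hu, Or.inl hcontra,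
        w, Sym2.mem_mk_left _ _, SimpleGraph.Reachable.refl w⟩
  rcases hw with rfl | ⟨hxw, hwy, hγ⟩
  · exact lemA hc hxy hψproper M1 M2
  · have hxwy : s(x, w) ≠ s(x, y) := fun h => hwy (Sym2.congr_right.mp h)
    have hadjxw' : G'.Adj x w := by
      rw [hG'def, SimpleGraph.deleteEdges_adj]
      exact ⟨hxw, by simpa using hxwy⟩
    have hγα : φ s(x, w) ≠ α := hαx w hadjxw'
    have hγβ : φ s(x, w) ≠ β := by
      have := hβw' x hadjxw'.symm
      rwa [Sym2.eq_swap] at this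
    have hψxw : ψ s(x, w) = φ s(x, w) := by
      have hF : ¬ Flip s(x, w) := fun hF => hxC (F1 _ hF x (Sym2.mem_mk_left _ _))
      simp only [hψdef, if_neg hF]
    have M3 : ψ s(x, w) ∈ missing G' Δ ψ y := by
      rw [mem_missing, hψxw]
      refine ⟨(mem_missing.mp hγ).1, fun u hu => ?_⟩
      by_cases hF : Flip s(y, u)
      · simp only [hψdef, if_pos hF]
        by_cases hh : φ s(y, u) = α
        · rw [if_pos hh]; exact fun h => hγβ h.symm
        · rw [if_neg hh]; exact fun h => hγα h.symm
      · simp only [hψdef, if_neg hF]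
        exact (mem_missing.mp hγ).2 u hu
    exact lemB hc hxy hψproper hxw hwy M3 M1 M2

lemma lemFan (hc : EdgeCritical G Δ) (hxy : G.Adj x y)
    (hφ : IsProperEdgeColoring (G.deleteEdges {s(x, y)}) Δ φ)
    (hne : (missing (G.deleteEdges {s(x, y)}) Δ φ x).Nonempty)
    {u v : V}
    (hu : u = y ∨ (G.Adj x u ∧ u ≠ y ∧
      φ s(x, u) ∈ missing (G.deleteEdges {s(x, y)}) Δ φ y))
    (hv : v = y ∨ (G.Adj x v ∧ v ≠ y ∧
      φ s(x, v) ∈ missing (G.deleteEdges {s(x, y)}) Δ φ y))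
    (huv : u ≠ v) {β : ℕ}
    (hβu : β ∈ missing (G.deleteEdges {s(x, y)}) Δ φ u)
    (hβv : β ∈ missing (G.deleteEdges {s(x, y)}) Δ φ v) : False := by
  set G' := G.deleteEdges {s(x, y)} with hG'def
  by_cases hβx : β ∈ missing G' Δ φ x
  · exact lemFinish hc hxy hφ hu hβx hβu
  obtain ⟨α, hα⟩ := hne
  have hαβ : α ≠ β := fun h => hβx (h ▸ hα)
  by_cases hαu : α ∈ missing G' Δ φ u
  · exact lemFinish hc hxy hφ hu hα hαu
  by_cases hαv : α ∈ missing G' Δ φ v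
  · exact lemFinish hc hxy hφ hv hα hαv
  set H := chainGraph G' φ α β with hHdef
  -- degree bounds
  have hHadj : ∀ a b, H.Adj a b ↔ G'.Adj a b ∧ (φ s(a, b) = α ∨ φ s(a, b) = β) := by
    intro a b; rfl
  have hdeg2 : ∀ t, H.degree t ≤ 2 := by
    intro t
    have : H.degree t ≤ ({α, β} : Finset ℕ).card := by
      apply Finset.card_le_card_of_injOn (fun u => φ s(t, u))
      · intro a ha
        rw [Finset.mem_coe, SimpleGraph.mem_neighborFinset, hHadj] at ha
        rcases ha.2 with h | h <;> simp [h]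
      · intro a ha b hb hab
        rw [Finset.mem_coe, SimpleGraph.mem_neighborFinset, hHadj] at ha hb
        by_contra hne2
        exact proper_ne hφ ha.1 hb.1 hne2 hab
    calc H.degree t ≤ ({α, β} : Finset ℕ).card := this
      _ ≤ 2 := le_trans (Finset.card_insert_le _ _) (by simp)
  have hdeg1 : ∀ (t : V) (c : ℕ), (c = α ∨ c = β) → c ∈ missing G' Δ φ t →
      H.degree t ≤ 1 := by
    intro t c hcor hct
    have : H.degree t ≤ (({α, β} : Finset ℕ).erase c).card := by
      apply Finset.card_le_card_of_injOn (fun u => φ s(t, u))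
      · intro a ha
        rw [Finset.mem_coe, SimpleGraph.mem_neighborFinset, hHadj] at ha
        rw [Finset.mem_coe, Finset.mem_erase]
        refine ⟨fun h => (mem_missing.mp hct).2 a ha.1 h, ?_⟩
        rcases ha.2 with h | h <;> simp [h]
      · intro a ha b hb hab
        rw [Finset.mem_coe, SimpleGraph.mem_neighborFinset, hHadj] at ha hb
        by_contra hne2
        exact proper_ne hφ ha.1 hb.1 hne2 hab
    refine le_trans this ?_
    have h2 : ({α, β} : Finset ℕ).card = 2 := by
      rw [Finset.card_insert_of_notMem (by simp [hαβ]), Finset.card_singleton]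
    have hcmem : c ∈ ({α, β} : Finset ℕ) := by
      rcases hcor with rfl | rfl <;> simp
    rw [Finset.card_erase_of_mem hcmem, h2]
  have hux : u ≠ x := by
    rcases hu with rfl | ⟨h1, _, _⟩
    · exact hxy.ne'
    · exact h1.ne'
  have hvx : v ≠ x := by
    rcases hv with rfl | ⟨h1, _, _⟩
    · exact hxy.ne'
    · exact h1.ne'
  have hreach : ¬ H.Reachable u x ∨ ¬ H.Reachable v x := by
    by_contra hcon
    push_neg at hcon
    exact three_deg_one H hdeg2 (Ne.symm huv) hvx hux
      (hdeg1 v β (Or.inr rfl) hβv) (hdeg1 u β (Or.inr rfl) hβu)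
      (hdeg1 x α (Or.inl rfl) hα)
      (hcon.1.trans hcon.2.symm) hcon.1
  rcases hreach with h | h
  · exact lemFlip hc hxy hφ hαβ hα hu hβu h
  · exact lemFlip hc hxy hφ hαβ hα hv hβv h


-- card of missing, lower bound
lemma card_missing_real {G' : SimpleGraph V} {φ' : Sym2 V → ℕ}
    (hφ' : IsProperEdgeColoring G' Δ φ') (v : V) :
    (Δ : ℝ) - (G'.degree v : ℝ) ≤ ((missing G' Δ φ' v).card : ℝ) := by
  have himg : missing G' Δ φ' v =
      (Finset.Icc 1 Δ) \ ((G'.neighborFinset v).image (fun u => φ' s(v, u))) := by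
    ext c
    simp only [missing, Finset.mem_filter, Finset.mem_sdiff, Finset.mem_image,
      SimpleGraph.mem_neighborFinset, not_exists]
    constructor
    · rintro ⟨h1, h2⟩
      exact ⟨h1, fun u => fun ⟨hu1, hu2⟩ => h2 u hu1 hu2⟩
    · rintro ⟨h1, h2⟩
      exact ⟨h1, fun u hu1 hu2 => h2 u ⟨hu1, hu2⟩⟩
  have hnat : Δ - G'.degree v ≤ (missing G' Δ φ' v).card := by
    rw [himg]
    calc Δ - G'.degree v
        = (Finset.Icc 1 Δ).card - G'.degree v := by rw [Nat.card_Icc]; omega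
      _ ≤ (Finset.Icc 1 Δ).card - ((G'.neighborFinset v).image (fun u => φ' s(v, u))).card := by
          have := Finset.card_image_le (s := G'.neighborFinset v) (f := fun u => φ' s(v, u))
          unfold SimpleGraph.degree
          omega
      _ ≤ _ := Finset.le_card_sdiff _ _
  by_cases h : G'.degree v ≤ Δ
  · have := (Nat.cast_le (α := ℝ)).mpr hnat
    rw [Nat.cast_sub h] at this
    linarith
  · push_neg at h
    have : (Δ : ℝ) < (G'.degree v : ℝ) := by exact_mod_cast h
    have h0 : (0 : ℝ) ≤ ((missing G' Δ φ' v).card : ℝ) := Nat.cast_nonneg _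
    linarith

lemma nbr_x (hxy : G.Adj x y) :
    (G.deleteEdges {s(x, y)}).neighborFinset x = (G.neighborFinset x).erase y := by
  ext a
  rw [SimpleGraph.mem_neighborFinset, SimpleGraph.deleteEdges_adj, Finset.mem_erase,
    SimpleGraph.mem_neighborFinset, Set.mem_singleton_iff]
  constructor
  · rintro ⟨h1, h2⟩
    exact ⟨fun h => h2 (by rw [h]), h1⟩
  · rintro ⟨h1, h2⟩
    exact ⟨h2, fun h => h1 (Sym2.congr_right.mp h)⟩

lemma nbr_y (hxy : G.Adj x y) :
    (G.deleteEdges {s(x, y)}).neighborFinset y = (G.neighborFinset y).erase x := by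
  ext a
  rw [SimpleGraph.mem_neighborFinset, SimpleGraph.deleteEdges_adj, Finset.mem_erase,
    SimpleGraph.mem_neighborFinset, Set.mem_singleton_iff]
  constructor
  · rintro ⟨h1, h2⟩
    refine ⟨fun h => h2 ?_, h1⟩
    rw [h, Sym2.eq_swap]
  · rintro ⟨h1, h2⟩
    refine ⟨h2, fun h => h1 ?_⟩
    rw [Sym2.eq_iff] at h
    rcases h with ⟨h3, _⟩ | ⟨_, h4⟩
    · exact absurd h3 hxy.ne'
    · exact h4
lemma nbr_z (hxy : G.Adj x y) {z : V} (hzx : z ≠ x) (hzy : z ≠ y) :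
    (G.deleteEdges {s(x, y)}).neighborFinset z = G.neighborFinset z := by
  ext a
  rw [SimpleGraph.mem_neighborFinset, SimpleGraph.deleteEdges_adj,
    SimpleGraph.mem_neighborFinset, Set.mem_singleton_iff]
  constructor
  · exact fun h => h.1
  · intro h
    refine ⟨h, fun he => ?_⟩
    rw [Sym2.eq_iff] at he
    rcases he with ⟨h1, _⟩ | ⟨h1, _⟩
    · exact hzx h1
    · exact hzy h1




end

theorem stmt7 (G : SimpleGraph V) [Fintype V] (Δ : ℕ) (hc : EdgeCritical G Δ)
    (x y : V) (hxy : G.Adj x y) (φ : Sym2 V → ℕ)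
    (hφ : IsProperEdgeColoring (G.deleteEdges {s(x, y)}) Δ φ)
    (q : ℝ) (hq0 : 0 < q) (hq1 : (G.degree x : ℝ) < q) (hq2 : q ≤ (Δ : ℝ) - 1) :
    (Δ : ℝ) - (G.degree y : ℝ) + 1 -
        ⌊((G.degree x : ℝ) + (G.degree y : ℝ) - (Δ : ℝ) - 2) / ((Δ : ℝ) - q)⌋ ≤
      ((Finset.univ.filter (fun z => G.Adj x z ∧ z ≠ y ∧ q < (G.degree z : ℝ) ∧
        φ s(x, z) ∈ missing (G.deleteEdges {s(x, y)}) Δ φ y)).card : ℝ) := by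
  classical
  set G' := G.deleteEdges {s(x, y)} with hG'def
  set M := missing G' Δ φ with hMdef
  have hdx1 : 1 ≤ G.degree x := by
    have : y ∈ G.neighborFinset x := (SimpleGraph.mem_neighborFinset _ _ _).mpr hxy
    have := Finset.card_pos.mpr ⟨y, this⟩
    unfold SimpleGraph.degree
    omega
  have hdy1 : 1 ≤ G.degree y := by
    have : x ∈ G.neighborFinset y := (SimpleGraph.mem_neighborFinset _ _ _).mpr hxy.symm
    have := Finset.card_pos.mpr ⟨x, this⟩
    unfold SimpleGraph.degree
    omega
  have hdegx' : ((G'.degree x : ℝ)) = (G.degree x : ℝ) - 1 := by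
    unfold SimpleGraph.degree
    rw [show G'.neighborFinset x = (G.neighborFinset x).erase y by convert nbr_x hxy,
      Finset.card_erase_of_mem ((SimpleGraph.mem_neighborFinset _ _ _).mpr hxy)]
    have h1 : (1 : ℕ) ≤ (G.neighborFinset x).card := hdx1
    rw [Nat.cast_sub h1]
    norm_num
  have hdegy' : ((G'.degree y : ℝ)) = (G.degree y : ℝ) - 1 := by
    unfold SimpleGraph.degree
    rw [show G'.neighborFinset y = (G.neighborFinset y).erase x by convert nbr_y hxy,
      Finset.card_erase_of_mem ((SimpleGraph.mem_neighborFinset _ _ _).mpr hxy.symm)]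
    have h1 : (1 : ℕ) ≤ (G.neighborFinset y).card := hdy1
    rw [Nat.cast_sub h1]
    norm_num
  have hmx : (Δ : ℝ) - (G.degree x : ℝ) + 1 ≤ ((M x).card : ℝ) := by
    have := card_missing_real hφ x
    replace this : (Δ : ℝ) - ((G.degree x : ℝ) - 1) ≤ ((missing G' Δ φ x).card : ℝ) := by
      rw [← hdegx']; convert this
    rw [hMdef, hG'def]
    linarith
  have hmy : (Δ : ℝ) - (G.degree y : ℝ) + 1 ≤ ((M y).card : ℝ) := by
    have := card_missing_real hφ y
    replace this : (Δ : ℝ) - ((G.degree y : ℝ) - 1) ≤ ((missing G' Δ φ y).card : ℝ) := by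
      rw [← hdegy']; convert this
    rw [hMdef, hG'def]
    linarith
  have hq1' : (G.degree x : ℝ) < (Δ : ℝ) - 1 := lt_of_lt_of_le hq1 hq2
  have hne : (M x).Nonempty := by
    rw [← Finset.card_pos]
    have h0 : (0 : ℝ) < ((M x).card : ℝ) := by linarith
    exact_mod_cast h0
  set P : V → Prop := fun z => G.Adj x z ∧ z ≠ y ∧ φ s(x, z) ∈ M y with hPdef
  set Zy : Finset V := Finset.univ.filter P with hZydef
  set W : Finset V := Zy.filter (fun z => ¬ q < (G.degree z : ℝ)) with hWdef
  set Zt : Finset V := Finset.univ.filter (fun z => G.Adj x z ∧ z ≠ y ∧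
    q < (G.degree z : ℝ) ∧ φ s(x, z) ∈ M y) with hZtdef
  have hsplit : Zt.card + W.card = Zy.card := by
    have hZt2 : Zt = Zy.filter (fun z => q < (G.degree z : ℝ)) := by
      ext z
      simp only [hZtdef, hZydef, hPdef, Finset.mem_filter, Finset.mem_univ, true_and]
      tauto
    rw [hZt2, hWdef]
    exact Finset.card_filter_add_card_filter_not _
  have hsurj : ((M y : Finset ℕ) : Set ℕ) ⊆ (fun z => φ s(x, z)) '' (Zy : Set V) := by
    intro c hc'
    rw [Finset.mem_coe] at hc'
    by_contra hno
    have hcx : c ∈ M x := by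
      rw [hMdef, mem_missing]
      refine ⟨(mem_missing.mp (show c ∈ missing G' Δ φ y from hc')).1, fun u hu => ?_⟩
      have hu' := hu
      rw [hG'def, SimpleGraph.deleteEdges_adj, Set.mem_singleton_iff] at hu'
      have hadjG : G.Adj x u := hu'.1
      have huy : u ≠ y := fun h => hu'.2 (by rw [h])
      intro hceq
      apply hno
      refine ⟨u, ?_, hceq⟩
      rw [Finset.mem_coe, hZydef, Finset.mem_filter]
      exact ⟨Finset.mem_univ _, hadjG, huy, hceq ▸ hc'⟩
    exact lemA hc hxy hφ (show c ∈ missing G' Δ φ x from hcx) hc'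
  have hcard1 : (M y).card ≤ Zy.card := Finset.card_le_card_of_surjOn _ hsurj
  have hWP : ∀ z ∈ W, P z ∧ ¬ q < (G.degree z : ℝ) := by
    intro z hz
    rw [hWdef, Finset.mem_filter] at hz
    have := hz.1
    rw [hZydef, Finset.mem_filter] at this
    exact ⟨this.2, hz.2⟩
  have hWx : ∀ z ∈ W, z ≠ x := fun z hz => ((hWP z hz).1).1.ne'
  have hWy : ∀ z ∈ W, z ≠ y := fun z hz => (hWP z hz).1.2.1
  have hxI : x ∉ insert y W := by
    rw [Finset.mem_insert]
    push_neg
    exact ⟨hxy.ne, fun h => (hWx x h) rfl⟩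
  have hyW : y ∉ W := fun h => (hWy y h) rfl
  set I : Finset V := insert x (insert y W) with hIdef
  have hform : ∀ t ∈ I, t = x ∨ (t = y ∨ (G.Adj x t ∧ t ≠ y ∧ φ s(x, t) ∈ M y)) := by
    intro t ht
    rw [hIdef, Finset.mem_insert, Finset.mem_insert] at ht
    rcases ht with rfl | rfl | h
    · exact Or.inl rfl
    · exact Or.inr (Or.inl rfl)
    · exact Or.inr (Or.inr (hWP t h).1)
  have hdisj : ∀ a ∈ I, ∀ b ∈ I, a ≠ b → Disjoint (M a) (M b) := by
    intro a ha b hb hab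
    rw [Finset.disjoint_left]
    intro c hca hcb
    rcases hform a ha with rfl | hfa
    · rcases hform b hb with rfl | hfb
      · exact hab rfl
      · exact lemFinish hc hxy hφ hfb hca hcb
    · rcases hform b hb with rfl | hfb
      · exact lemFinish hc hxy hφ hfa hcb hca
      · exact lemFan hc hxy hφ hne hfa hfb hab hca hcb
  have hsum : ∑ t ∈ I, (M t).card ≤ Δ := by
    rw [← Finset.card_biUnion hdisj]
    have hsub : I.biUnion M ⊆ Finset.Icc 1 Δ := by
      intro c hcmem
      rw [Finset.mem_biUnion] at hcmem
      obtain ⟨t, _, hct⟩ := hcmem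
      exact (mem_missing.mp (show c ∈ missing G' Δ φ t from hct)).1
    calc (I.biUnion M).card ≤ (Finset.Icc 1 Δ).card := Finset.card_le_card hsub
      _ = Δ := by rw [Nat.card_Icc]; omega
  rw [hIdef, Finset.sum_insert hxI, Finset.sum_insert hyW] at hsum
  have hWsum : (W.card : ℝ) * ((Δ : ℝ) - q) ≤ ∑ z ∈ W, ((M z).card : ℝ) := by
    have hzb : ∀ z ∈ W, (Δ : ℝ) - q ≤ ((M z).card : ℝ) := by
      intro z hz
      have h1 := card_missing_real hφ z
      have hdz : ((G.deleteEdges {s(x, y)}).degree z : ℝ) = (G.degree z : ℝ) := by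
        unfold SimpleGraph.degree
        rw [nbr_z hxy (hWx z hz) (hWy z hz)]
      replace h1 : (Δ : ℝ) - (G.degree z : ℝ) ≤ ((missing G' Δ φ z).card : ℝ) := by
        rw [← hdz]; convert h1
      have h2 : (G.degree z : ℝ) ≤ q := not_lt.mp (hWP z hz).2
      rw [hMdef, hG'def]
      linarith
    calc (W.card : ℝ) * ((Δ : ℝ) - q) = W.card • ((Δ : ℝ) - q) := (nsmul_eq_mul _ _).symm
      _ ≤ ∑ z ∈ W, ((M z).card : ℝ) := Finset.card_nsmul_le_sum W _ _ hzb
  have hsumR : ((M x).card : ℝ) + (((M y).card : ℝ) + ∑ z ∈ W, ((M z).card : ℝ))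
      ≤ (Δ : ℝ) := by
    exact_mod_cast hsum
  have hΔq : (0 : ℝ) < (Δ : ℝ) - q := by linarith
  have hWle : (W.card : ℝ) ≤
      ((G.degree x : ℝ) + (G.degree y : ℝ) - (Δ : ℝ) - 2) / ((Δ : ℝ) - q) := by
    rw [le_div_iff₀ hΔq]
    linarith
  have hfl : (W.card : ℝ) ≤
      (⌊((G.degree x : ℝ) + (G.degree y : ℝ) - (Δ : ℝ) - 2) / ((Δ : ℝ) - q)⌋ : ℝ) := by
    have h1 : ((W.card : ℤ) : ℝ) ≤
        ((G.degree x : ℝ) + (G.degree y : ℝ) - (Δ : ℝ) - 2) / ((Δ : ℝ) - q) := by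
      push_cast
      exact hWle
    have := Int.le_floor.mpr h1
    exact_mod_cast this
  have hZyR : (Δ : ℝ) - (G.degree y : ℝ) + 1 ≤ (Zy.card : ℝ) := by
    have := (Nat.cast_le (α := ℝ)).mpr hcard1
    linarith
  have hcards : (Zt.card : ℝ) = (Zy.card : ℝ) - (W.card : ℝ) := by
    have h2 : ((Zt.card + W.card : ℕ) : ℝ) = ((Zy.card : ℕ) : ℝ) := by rw [hsplit]
    push_cast at h2
    linarith
  linarith
end
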